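/- arXiv:2002.04420 — 8 statements merged into one kernel-verified Lean document; each statement's English description precedes it below -/
import Mathlib

section
/- Let m ≥ 1 be an integer and let a₁, …, a_m be complex numbers with |a_i| = 1 for all i. Then ∏_{1 ≤ i < j ≤ m} |a_i − a_j| ≤ m^{m/2}. -/
open Matrix Finset
open scoped ComplexOrder

/-- Trace of a Hermitian matrix equals the sum of its eigenvalues. -/
lemma trace_eq_sum_eigenvalues' {n : Type*} [Fintype n] [DecidableEq n]
    {A : Matrix n n ℂ} (hA : A.IsHermitian) :
    A.trace = ∑ i, (hA.eigenvalues i : ℂ) := by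
  conv_lhs => rw [hA.spectral_theorem]
  rw [Unitary.conjStarAlgAut_apply, trace_mul_cycle, Unitary.coe_star_mul_self, one_mul, trace_diagonal]
  rfl

/-- If `a₁, …, a_m` are complex numbers of absolute value `1`, then
`∏_{1 ≤ i < j ≤ m} |a_i − a_j| ≤ m^(m/2)`. -/
theorem vandermonde_unit_circle_bound (m : ℕ) (hm : 1 ≤ m) (a : Fin m → ℂ)
    (ha : ∀ i, ‖a i‖ = 1) :
    ∏ i : Fin m, ∏ j ∈ Finset.Ioi i, ‖a i - a j‖ ≤ (m : ℝ) ^ ((m : ℝ) / 2) := by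
  set V : Matrix (Fin m) (Fin m) ℂ := Matrix.vandermonde a with hV
  -- Step 1 : the product in question is ‖det V‖
  have hdet : ∏ i : Fin m, ∏ j ∈ Finset.Ioi i, ‖a i - a j‖ = ‖V.det‖ := by
    rw [hV, Matrix.det_vandermonde, norm_prod]
    refine Finset.prod_congr rfl fun i _ => ?_
    rw [norm_prod]
    exact Finset.prod_congr rfl fun j _ => (norm_sub_rev _ _)
  -- The Gram matrix
  set G : Matrix (Fin m) (Fin m) ℂ := V * Vᴴ with hG
  have hGpsd : G.PosSemidef := Matrix.posSemidef_self_mul_conjTranspose V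
  have hGh : G.IsHermitian := hGpsd.1
  -- entries of V have norm 1
  have hVnorm : ∀ i j, V i j * star (V i j) = 1 := by
    intro i j
    rw [show star (V i j) = (starRingEnd ℂ) (V i j) from rfl, Complex.mul_conj]
    have : ‖V i j‖ = 1 := by
      simp [hV, Matrix.vandermonde_apply, norm_pow, ha i]
    rw [Complex.normSq_eq_norm_sq, this]
    norm_num
  -- trace of G is m^2
  have htrace : G.trace = ((m : ℂ) * m) := by
    rw [Matrix.trace]
    have hdiag : ∀ i, G.diag i = (m : ℂ) := by
      intro i
      simp only [Matrix.diag_apply, hG, Matrix.mul_apply, Matrix.conjTranspose_apply]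
      rw [Finset.sum_congr rfl fun j _ => hVnorm i j]
      simp
    rw [Finset.sum_congr rfl fun i _ => hdiag i]
    simp [mul_comm]
  -- sum of eigenvalues is m^2
  have hsum : ∑ i, hGh.eigenvalues i = (m : ℝ) * m := by
    have := trace_eq_sum_eigenvalues' hGh
    rw [htrace] at this
    have h2 : ((∑ i, hGh.eigenvalues i : ℝ) : ℂ) = (((m : ℝ) * m : ℝ) : ℂ) := by
      push_cast
      rw [← this]
    exact_mod_cast h2
  -- det G = ‖det V‖ ^ 2
  have hdetG : (‖V.det‖ ^ 2 : ℝ) = ∏ i, hGh.eigenvalues i := by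
    have h1 : G.det = ∏ i, (hGh.eigenvalues i : ℂ) := hGh.det_eq_prod_eigenvalues
    have h2 : G.det = ((‖V.det‖ ^ 2 : ℝ) : ℂ) := by
      rw [hG, Matrix.det_mul, Matrix.det_conjTranspose]
      rw [show star V.det = (starRingEnd ℂ) V.det from rfl, Complex.mul_conj,
        Complex.normSq_eq_norm_sq]
    have h3 : ((‖V.det‖ ^ 2 : ℝ) : ℂ) = ((∏ i, hGh.eigenvalues i : ℝ) : ℂ) := by
      rw [← h2, h1]; push_cast; rfl
    exact_mod_cast h3
  -- AM-GM on the eigenvalues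
  have hmpos : (0 : ℝ) < m := by exact_mod_cast hm
  have hev : ∀ i ∈ Finset.univ, (0 : ℝ) ≤ hGh.eigenvalues i :=
    fun i _ => hGpsd.eigenvalues_nonneg i
  have hamgm : ∏ i, hGh.eigenvalues i ^ ((m : ℝ)⁻¹) ≤ (m : ℝ) := by
    have := Real.geom_mean_le_arith_mean_weighted Finset.univ
      (fun _ => (m : ℝ)⁻¹) hGh.eigenvalues
      (fun i _ => by positivity)
      (by simp [Finset.card_univ]; field_simp)
      hev
    calc ∏ i, hGh.eigenvalues i ^ ((m : ℝ)⁻¹)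
        ≤ ∑ i, (m : ℝ)⁻¹ * hGh.eigenvalues i := this
      _ = (m : ℝ)⁻¹ * ∑ i, hGh.eigenvalues i := by rw [Finset.mul_sum]
      _ = (m : ℝ) := by rw [hsum]; field_simp
  have hprod_le : ∏ i, hGh.eigenvalues i ≤ (m : ℝ) ^ (m : ℝ) := by
    have hlhs : (∏ i, hGh.eigenvalues i ^ ((m : ℝ)⁻¹)) ^ (m : ℝ)
        = ∏ i, hGh.eigenvalues i := by
      rw [Real.finset_prod_rpow _ _ hev]
      rw [← Real.rpow_mul (Finset.prod_nonneg hev),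
        inv_mul_cancel₀ (ne_of_gt hmpos), Real.rpow_one]
    calc ∏ i, hGh.eigenvalues i
        = (∏ i, hGh.eigenvalues i ^ ((m : ℝ)⁻¹)) ^ (m : ℝ) := hlhs.symm
      _ ≤ (m : ℝ) ^ (m : ℝ) := by
          apply Real.rpow_le_rpow (Finset.prod_nonneg fun i hi => Real.rpow_nonneg (hev i hi) _) hamgm
          positivity
  -- conclude
  rw [hdet]
  have hsq : ‖V.det‖ ^ 2 ≤ (m : ℝ) ^ (m : ℝ) := hdetG ▸ hprod_le
  have := Real.sqrt_le_sqrt hsq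
  rwa [Real.sqrt_sq (norm_nonneg _), Real.sqrt_eq_rpow,
    ← Real.rpow_mul (le_of_lt hmpos), show (m : ℝ) * (1/2) = (m : ℝ)/2 by ring] at this
end

section
/- Let m ≥ 1 be an integer and let a₁, …, a_m be complex numbers with |a_i| = 1 for all i. Then equality ∏_{1 ≤ i < j ≤ m} |a_i − a_j| = m^{m/2} holds if and only if the numbers a₁, …, a_m are equidistributed on the unit circle, i.e., there exists c ∈ ℂ with |c| = 1 such that the multiset {a₁, …, a_m} equals the multiset of all m-th roots of c (equivalently, ∏_{i=1}^m (X − a_i) = X^m − c). -/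
open Polynomial Finset Matrix
open scoped ComplexOrder


lemma sq_prod_eq (m : ℕ) (a : Fin m → ℂ) :
    (∏ i : Fin m, ∏ j ∈ Finset.Ioi i, ‖a i - a j‖) ^ 2
      = ∏ i : Fin m, ∏ j ∈ Finset.univ.erase i, ‖a i - a j‖ := by
  calc (∏ i : Fin m, ∏ j ∈ Finset.Ioi i, ‖a i - a j‖) ^ 2
      = ∏ i : Fin m, ∏ j ∈ Finset.Ioi i, (‖a j - a i‖ * ‖a i - a j‖) := by
        rw [sq, ← Finset.prod_mul_distrib]
        refine Finset.prod_congr rfl fun i _ => ?_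
        rw [← Finset.prod_mul_distrib]
        exact Finset.prod_congr rfl fun j _ => by rw [norm_sub_rev]
    _ = ∏ i : Fin m, ∏ j ∈ ({i}ᶜ : Finset (Fin m)), ‖a j - a i‖ := by
        convert Finset.prod_prod_Ioi_mul_eq_prod_prod_off_diag (fun j i => ‖a j - a i‖) using 2 with i hi
    _ = ∏ i : Fin m, ∏ j ∈ Finset.univ.erase i, ‖a i - a j‖ := by
        refine Finset.prod_congr rfl fun i _ => ?_
        rw [Finset.compl_singleton]
        exact Finset.prod_congr rfl fun j _ => by rw [norm_sub_rev]

lemma erase_prod_eq (m : ℕ) (a : Fin m → ℂ) (c : ℂ)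
    (hf : ∏ i : Fin m, (Polynomial.X - Polynomial.C (a i)) = Polynomial.X ^ m - Polynomial.C c)
    (i : Fin m) :
    ∏ j ∈ Finset.univ.erase i, (a i - a j) = m * a i ^ (m - 1) := by
  classical
  have hnodal : Lagrange.nodal Finset.univ a = X ^ m - C c := by
    rw [Lagrange.nodal_eq]; exact hf
  have h1 : eval (a i) (Lagrange.nodal ((Finset.univ : Finset (Fin m)).erase i) a)
      = ∏ j ∈ Finset.univ.erase i, (a i - a j) := by
    rw [Lagrange.eval_nodal]
  rw [← h1, ← Lagrange.eval_nodal_derivative_eval_node_eq (Finset.mem_univ i), hnodal]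
  simp [Polynomial.derivative_sub, Polynomial.derivative_X_pow]


lemma amgm_eq_case (m : ℕ) (hm : 0 < m) (lam : Fin m → ℝ) (hpos : ∀ i, 0 < lam i)
    (hsum : ∑ i, lam i = (m : ℝ) * m) (hprod : ∏ i, lam i = (m : ℝ) ^ m) (i : Fin m) :
    lam i = m := by
  have hm' : (0:ℝ) < m := by exact_mod_cast hm
  have hw : ∑ _j : Fin m, (1 : ℝ) / m = 1 := by
    simp [Finset.sum_const]
    field_simp
  have hmean : ∑ j, (1 / (m:ℝ)) • lam j = m := by
    simp only [smul_eq_mul, ← Finset.mul_sum, hsum]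
    field_simp
  have hlog : Real.log (∑ j, (1 / (m:ℝ)) • lam j) ≤ ∑ j, (1 / (m:ℝ)) • Real.log (lam j) := by
    rw [hmean]
    have : ∑ j, (1 / (m:ℝ)) • Real.log (lam j) = (1/(m:ℝ)) * Real.log (∏ j, lam j) := by
      rw [Real.log_prod (fun j _ => (hpos j).ne'), Finset.mul_sum]
      simp [smul_eq_mul]
    rw [this, hprod, Real.log_pow]
    field_simp
    exact le_rfl
  have hcon := strictConcaveOn_log_Ioi.eq_of_map_sum_eq
    (t := Finset.univ) (w := fun _ => 1 / (m:ℝ)) (p := lam)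
    (fun j _ => by positivity) hw (fun j _ => hpos j) hlog
  have hall : ∀ j, lam j = lam i := fun j =>
    hcon (Finset.mem_univ j) (Finset.mem_univ i)
  have : ∑ j, lam j = (m : ℝ) * lam i := by
    rw [Finset.sum_congr rfl fun j _ => hall j]
    simp [Finset.sum_const, mul_comm]
  rw [this] at hsum
  exact mul_left_cancel₀ hm'.ne' hsum


lemma rpow_half_sq (m : ℕ) : (((m:ℝ)) ^ ((m:ℝ)/2)) ^ 2 = (m:ℝ) ^ m := by
  rw [← Real.rpow_natCast ((m:ℝ) ^ ((m:ℝ)/2)) 2, ← Real.rpow_mul (Nat.cast_nonneg m),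
    Nat.cast_ofNat, div_mul_cancel₀ _ (two_ne_zero), Real.rpow_natCast]

lemma converse_dir (m : ℕ) (a : Fin m → ℂ) (ha : ∀ i, ‖a i‖ = 1)
    (c : ℂ)
    (hf : ∏ i : Fin m, (Polynomial.X - Polynomial.C (a i)) = Polynomial.X ^ m - Polynomial.C c) :
    (∏ i : Fin m, ∏ j ∈ Finset.Ioi i, ‖a i - a j‖) = (m : ℝ) ^ ((m : ℝ) / 2) := by
  set P := ∏ i : Fin m, ∏ j ∈ Finset.Ioi i, ‖a i - a j‖ with hPdef
  have hP2 : P ^ 2 = (m:ℝ) ^ m := by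
    rw [hPdef, sq_prod_eq]
    have key : ∀ i : Fin m, ∏ j ∈ Finset.univ.erase i, ‖a i - a j‖ = m := by
      intro i
      rw [← norm_prod, erase_prod_eq m a c hf i, norm_mul, norm_pow, ha, one_pow, mul_one]
      simp
    rw [Finset.prod_congr rfl fun i _ => key i]
    simp
  have hPnn : 0 ≤ P := Finset.prod_nonneg fun i _ =>
    Finset.prod_nonneg fun j _ => norm_nonneg _
  have h2 : P ^ 2 = (((m:ℝ)) ^ ((m:ℝ)/2)) ^ 2 := by rw [hP2, rpow_half_sq]
  calc P = Real.sqrt (P ^ 2) := by rw [Real.sqrt_sq hPnn]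
    _ = Real.sqrt ((((m:ℝ)) ^ ((m:ℝ)/2)) ^ 2) := by rw [h2]
    _ = ((m:ℝ)) ^ ((m:ℝ)/2) := Real.sqrt_sq (Real.rpow_nonneg (Nat.cast_nonneg m) _)

lemma gram_offdiag_zero (m : ℕ) (hm : 1 ≤ m) (a : Fin m → ℂ) (ha : ∀ i, ‖a i‖ = 1)
    (hP : (∏ i : Fin m, ∏ j ∈ Finset.Ioi i, ‖a i - a j‖) = (m : ℝ) ^ ((m : ℝ) / 2)) :
    ∀ i j : Fin m, i ≠ j →
      (Matrix.vandermonde a * (Matrix.vandermonde a)ᴴ) i j = 0 := by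
  classical
  set V := Matrix.vandermonde a with hV
  set G := V * Vᴴ with hGdef
  have hG : G.IsHermitian := Matrix.isHermitian_mul_conjTranspose_self V
  have hPSD : G.PosSemidef := Matrix.posSemidef_self_mul_conjTranspose V
  -- determinant
  have hnormdet : ‖V.det‖ = ∏ i : Fin m, ∏ j ∈ Finset.Ioi i, ‖a i - a j‖ := by
    rw [hV, Matrix.det_vandermonde, norm_prod]
    exact Finset.prod_congr rfl fun i _ => by
      rw [norm_prod]; exact Finset.prod_congr rfl fun j _ => norm_sub_rev _ _
  have hdetG : G.det = (((m:ℝ) ^ m : ℝ) : ℂ) := by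
    rw [hGdef, Matrix.det_mul, Matrix.det_conjTranspose, Complex.star_def,
      Complex.mul_conj', hnormdet, hP, ← Complex.ofReal_pow, rpow_half_sq]
  -- diagonal entries
  have hdiag : ∀ i, G i i = (m : ℂ) := by
    intro i
    rw [hGdef, Matrix.mul_apply]
    have : ∀ k : Fin m, V i k * Vᴴ k i = 1 := by
      intro k
      rw [Matrix.conjTranspose_apply, Complex.star_def, Complex.mul_conj', hV,
        Matrix.vandermonde]
      simp only [Matrix.of_apply]
      rw [norm_pow, ha, one_pow]
      norm_num
    rw [Finset.sum_congr rfl fun k _ => this k]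
    simp
  -- trace
  have htrace : G.trace = ((m : ℂ) * m) := by
    rw [Matrix.trace]
    simp only [Matrix.diag_apply]
    rw [Finset.sum_congr rfl fun i _ => hdiag i]
    simp [Finset.sum_const]
    try ring
  -- eigenvalues
  set lam := hG.eigenvalues with hlam
  have hprodlam : ∏ i, lam i = (m:ℝ) ^ m := by
    have h1 : G.det = ∏ i, (lam i : ℂ) := hG.det_eq_prod_eigenvalues
    rw [hdetG] at h1
    have := h1.symm
    rw [← Complex.ofReal_prod] at this
    exact_mod_cast this
  have hsumlam : ∑ i, lam i = (m:ℝ) * m := by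
    have hU := (Matrix.mem_unitaryGroup_iff').mp (hG.eigenvectorUnitary).2
    have h1 : G.trace = ∑ i, (lam i : ℂ) := by
      conv_lhs => rw [hG.spectral_theorem]
      rw [Unitary.conjStarAlgAut_apply, Matrix.trace_mul_cycle, hU, Matrix.one_mul, Matrix.trace_diagonal]
      simp [hlam]
    rw [htrace] at h1
    have := h1.symm
    rw [← Complex.ofReal_sum] at this
    have : ((∑ i, lam i : ℝ) : ℂ) = ((((m:ℝ) * m : ℝ)) : ℂ) := by push_cast; push_cast at this; exact this
    exact_mod_cast this
  have hpos : ∀ i, 0 < lam i := by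
    intro i
    rcases lt_or_eq_of_le (hPSD.eigenvalues_nonneg i) with h | h
    · exact h
    · exfalso
      have : ∏ j, lam j = 0 := Finset.prod_eq_zero (Finset.mem_univ i) h.symm
      rw [hprodlam] at this
      have hmpos : (0:ℝ) < (m:ℝ) ^ m := by positivity
      · exact hmpos.ne' this
  have hlameq : ∀ i, lam i = m := amgm_eq_case m hm lam hpos hsumlam hprodlam
  -- G = m • 1
  have hGeq : G = (m : ℂ) • (1 : Matrix (Fin m) (Fin m) ℂ) := by
    have hdiagonal : Matrix.diagonal (RCLike.ofReal ∘ lam) =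
        (m : ℂ) • (1 : Matrix (Fin m) (Fin m) ℂ) := by
      have hfun : (RCLike.ofReal ∘ lam : Fin m → ℂ) = fun _ => (m:ℂ) := by
        funext i; simp [hlameq i]
      rw [hfun, Matrix.smul_one_eq_diagonal]
    have hU := (Matrix.mem_unitaryGroup_iff).mp (hG.eigenvectorUnitary).2
    conv_lhs => rw [hG.spectral_theorem]
    rw [hdiagonal]
    rw [Unitary.conjStarAlgAut_apply, Matrix.mul_smul, Matrix.smul_mul, Matrix.mul_one, hU]
  intro i j hij
  rw [hGeq]
  simp [Matrix.one_apply, hij]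


lemma pow_eq_and_ne (m : ℕ) (hm : 1 ≤ m) (a : Fin m → ℂ) (ha : ∀ i, ‖a i‖ = 1)
    (h0 : ∀ i j : Fin m, i ≠ j →
      (Matrix.vandermonde a * (Matrix.vandermonde a)ᴴ) i j = 0)
    (i j : Fin m) (hij : i ≠ j) : a i ^ m = a j ^ m ∧ a i ≠ a j := by
  classical
  set z : ℂ := a i * star (a j) with hz
  have hsum : ∑ k ∈ Finset.range m, z ^ k = 0 := by
    have := h0 i j hij
    rw [Matrix.mul_apply] at this
    have heq : ∀ k : Fin m, Matrix.vandermonde a i k * (Matrix.vandermonde a)ᴴ k j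
        = z ^ (k : ℕ) := by
      intro k
      rw [Matrix.conjTranspose_apply, Matrix.vandermonde_apply, Matrix.vandermonde_apply,
        hz, mul_pow, ← star_pow]
    rw [Finset.sum_congr rfl fun k _ => heq k] at this
    rwa [← Fin.sum_univ_eq_sum_range]
  have hz1 : z ≠ 1 := by
    intro h
    rw [h] at hsum
    simp at hsum
    omega
  have hzm : z ^ m = 1 := by
    have := geom_sum_eq hz1 m
    rw [this] at hsum
    have hz1' : z - 1 ≠ 0 := sub_ne_zero.mpr hz1
    field_simp at hsum
    linear_combination hsum
  have hstar : star (a j) * a j = 1 := by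
    rw [Complex.star_def, Complex.conj_mul', ha]
    norm_num
  constructor
  · have : a i ^ m * star (a j) ^ m = 1 := by rw [← mul_pow, ← hz, hzm]
    calc a i ^ m = a i ^ m * (star (a j) ^ m * a j ^ m) := by
          rw [← mul_pow, hstar, one_pow, mul_one]
      _ = (a i ^ m * star (a j) ^ m) * a j ^ m := by ring
      _ = a j ^ m := by rw [this, one_mul]
  · intro h
    apply hz1
    rw [hz, h, mul_comm]
    exact hstar


lemma poly_eq_of_roots (m : ℕ) (hm : 1 ≤ m) (a : Fin m → ℂ) (hinj : Function.Injective a)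
    (c : ℂ) (hroot : ∀ i, a i ^ m = c) :
    ∏ i : Fin m, (Polynomial.X - Polynomial.C (a i)) = Polynomial.X ^ m - Polynomial.C c := by
  classical
  set g : ℂ[X] := X ^ m - C c with hg
  have hgmonic : g.Monic := monic_X_pow_sub_C c (by omega)
  have hgdeg : g.natDegree = m := natDegree_X_pow_sub_C
  set s : Finset ℂ := Finset.univ.image a with hs
  have hf : ∏ i : Fin m, (X - C (a i)) = ∏ x ∈ s, (X - C x) := by
    rw [hs, Finset.prod_image fun i _ j _ h => hinj h]
  have hfmonic : (∏ i : Fin m, (X - C (a i))).Monic :=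
    monic_prod_of_monic _ _ fun i _ => monic_X_sub_C _
  have hfdeg : (∏ i : Fin m, (X - C (a i))).natDegree = m := by
    rw [natDegree_prod_of_monic _ _ fun i _ => monic_X_sub_C _]
    simp
  have hdvd : (∏ i : Fin m, (X - C (a i))) ∣ g := by
    rw [hf]
    have : (s.val.map fun x => X - C x).prod ∣ g := by
      rw [Multiset.prod_X_sub_C_dvd_iff_le_roots hgmonic.ne_zero]
      rw [Multiset.le_iff_count]
      intro x
      by_cases hx : x ∈ s
      · have h1 : s.val.count x = 1 := by
          rw [Multiset.count_eq_one_of_mem s.nodup hx]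
        rw [h1, Polynomial.count_roots]
        rw [Nat.one_le_iff_ne_zero, ← Nat.pos_iff_ne_zero]
        rw [Polynomial.rootMultiplicity_pos hgmonic.ne_zero]
        obtain ⟨i, _, rfl⟩ := Finset.mem_image.mp hx
        simp [hg, IsRoot, hroot i]
      · rw [Multiset.count_eq_zero_of_notMem (fun h => hx h)]
        exact Nat.zero_le _
    exact this
  exact (eq_of_monic_of_dvd_of_natDegree_le hfmonic hgmonic hdvd (by rw [hgdeg, hfdeg])).symm


/-- For complex numbers `a₁, …, a_m` of absolute value `1`, equality
`∏_{1 ≤ i < j ≤ m} |a_i − a_j| = m^(m/2)` holds if and only if the `a_i` are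
equidistributed on the unit circle, i.e. `∏ (X − a_i) = X^m − c` for some `c` with `|c| = 1`. -/
theorem vandermonde_unit_circle_eq_iff_equidistributed (m : ℕ) (hm : 1 ≤ m)
    (a : Fin m → ℂ) (ha : ∀ i, ‖a i‖ = 1) :
    (∏ i : Fin m, ∏ j ∈ Finset.Ioi i, ‖a i - a j‖) = (m : ℝ) ^ ((m : ℝ) / 2) ↔
      ∃ c : ℂ, ‖c‖ = 1 ∧
        ∏ i : Fin m, (Polynomial.X - Polynomial.C (a i)) = Polynomial.X ^ m - Polynomial.C c := by
  constructor
  · intro hP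
    have h0 := gram_offdiag_zero m hm a ha hP
    set i0 : Fin m := ⟨0, hm⟩ with hi0
    refine ⟨a i0 ^ m, ?_, ?_⟩
    · rw [norm_pow, ha, one_pow]
    · have hinj : Function.Injective a := by
        intro i j h
        by_contra hne
        exact (pow_eq_and_ne m hm a ha h0 i j hne).2 h
      have hroot : ∀ i, a i ^ m = a i0 ^ m := by
        intro i
        by_cases h : i = i0
        · rw [h]
        · exact (pow_eq_and_ne m hm a ha h0 i i0 h).1
      exact poly_eq_of_roots m hm a hinj (a i0 ^ m) hroot
  · rintro ⟨c, _, hf⟩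
    exact converse_dir m a ha c hf
end

section
/- Let d ≥ 1 and a ≥ 0 be integers and let t ≥ 1 be a real number. Then ∑_{λ ⊢ a} t^{d(a − ℓ(λ))} ≤ ∑_{μ ⊢ d·a} t^{d·a − ℓ(μ)}, where the left sum is over all partitions λ of a, the right sum is over all partitions μ of d·a, and ℓ(λ) denotes the number of parts of the partition λ. -/
/-- Multiply every part of a partition of `a` by `d`, getting a partition of `d*a`. -/
def scalePartition (d : ℕ) (hd : 1 ≤ d) (a : ℕ) (p : Nat.Partition a) :
    Nat.Partition (d * a) where
  parts := p.parts.map (d * ·)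
  parts_pos := by
    intro i hi
    obtain ⟨j, hj, rfl⟩ := Multiset.mem_map.mp hi
    exact Nat.mul_pos hd (p.parts_pos hj)
  parts_sum := by
    have : (p.parts.map (fun x => d * id x)).sum = d * (p.parts.map id).sum :=
      Multiset.sum_map_mul_left
    simpa [p.parts_sum] using this

lemma scalePartition_injective (d : ℕ) (hd : 1 ≤ d) (a : ℕ) :
    Function.Injective (scalePartition d hd a) := by
  intro p q h
  have hmul : Function.Injective (fun x : ℕ => d * x) := by
    intro x y hxy
    exact Nat.eq_of_mul_eq_mul_left hd hxy
  have := congrArg Nat.Partition.parts h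
  ext1
  exact Multiset.map_injective hmul this

lemma partition_card_le {a : ℕ} (p : Nat.Partition a) : Multiset.card p.parts ≤ a := by
  have h : (p.parts.map (fun _ => 1)).sum ≤ (p.parts.map id).sum :=
    Multiset.sum_map_le_sum_map _ _ (fun x hx => p.parts_pos hx)
  simpa [p.parts_sum] using h

/-- For `d ≥ 1`, `a ≥ 0` and a real `t ≥ 1`,
`∑_{λ ⊢ a} t^(d(a − ℓ(λ))) ≤ ∑_{μ ⊢ d·a} t^(d·a − ℓ(μ))`,
where the sums are over partitions and `ℓ` denotes the number of parts. -/
theorem partition_sum_scale_le (d : ℕ) (hd : 1 ≤ d) (a : ℕ) (t : ℝ) (ht : 1 ≤ t) :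
    ∑ lam : Nat.Partition a, t ^ (d * (a - lam.parts.card)) ≤
      ∑ mu : Nat.Partition (d * a), t ^ (d * a - mu.parts.card) := by
  classical
  have ht0 : (0:ℝ) ≤ t := le_trans zero_le_one ht
  calc
    ∑ lam : Nat.Partition a, t ^ (d * (a - lam.parts.card))
        ≤ ∑ lam : Nat.Partition a,
            t ^ (d * a - (scalePartition d hd a lam).parts.card) := by
          apply Finset.sum_le_sum
          intro p _
          apply pow_le_pow_right₀ ht
          have hcard : (scalePartition d hd a p).parts.card = p.parts.card := by
            simp [scalePartition]
          rw [hcard]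
          have h1 : p.parts.card ≤ d * p.parts.card :=
            Nat.le_mul_of_pos_left _ hd
          have h2 : d * (a - p.parts.card) = d * a - d * p.parts.card := Nat.mul_sub_left_distrib d a _
          omega
    _ = ∑ mu ∈ Finset.univ.image (scalePartition d hd a),
            t ^ (d * a - mu.parts.card) := by
          rw [Finset.sum_image]
          intro x _ y _ h
          exact scalePartition_injective d hd a h
    _ ≤ ∑ mu : Nat.Partition (d * a), t ^ (d * a - mu.parts.card) := by
          apply Finset.sum_le_sum_of_subset_of_nonneg (Finset.subset_univ _)
          intro i _ _
          positivity
end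

section
/- Let g ≥ 1 be an integer and let a₀, a₁, …, a_{2g} be complex numbers with a₀ ≠ 0. For t ∈ ℂ let f_t(X) := a₀X^{2g} + a₁X^{2g−1} + ⋯ + a_{g−1}X^{g+1} + t·X^g + a_{g+1}X^{g−1} + ⋯ + a_{2g}. Then there exists a polynomial Q ∈ ℂ[T] of degree strictly less than 2g such that for all t ∈ ℂ, disc(f_t) = g^{2g} a₀^{g−1} a_{2g}^{g−1} · t^{2g} + Q(t). In other words, the discriminant of f_t, viewed as a polynomial in the middle coefficient t, has degree at most 2g and the coefficient of t^{2g} equals g^{2g} a₀^{g−1} a_{2g}^{g−1}. -/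
open Polynomial Finset
section Helpers

private lemma exists_fin_fact (p : Polynomial ℂ) (n : ℕ) (hn : p.natDegree = n) :
    ∃ u : Fin n → ℂ, p = C p.leadingCoeff * ∏ i, (X - C (u i)) := by
  have hsp : p.Splits := IsAlgClosed.splits p
  have hcard : p.roots.toList.length = n := by
    rw [Multiset.length_toList, splits_iff_card_roots.mp hsp, hn]
  refine ⟨fun i => p.roots.toList.get (finCongr hcard.symm i), ?_⟩
  have h1 := hsp.eq_prod_roots
  conv_lhs => rw [h1]
  congr 1
  have : ∏ i : Fin n, (X - C (p.roots.toList.get (finCongr hcard.symm i)))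
      = ∏ j : Fin p.roots.toList.length, (X - C (p.roots.toList.get j)) :=
    (Fintype.prod_equiv (finCongr hcard) _ _ (fun j => rfl)).symm
  rw [this]
  simp only [List.get_eq_getElem]
  rw [Fin.prod_univ_fun_getElem p.roots.toList (fun a => X - C a)]
  have h2 : (List.map (fun a => X - C a) p.roots.toList).prod
      = (Multiset.map (fun a => X - C a) (↑p.roots.toList : Multiset ℂ)).prod := by
    rw [Multiset.map_coe, Multiset.prod_coe]
  rw [h2, Multiset.coe_toList]

private lemma derivative_finset_prod {ι : Type*} [DecidableEq ι] (s : Finset ι) (f : ι → Polynomial ℂ) :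
    derivative (∏ j ∈ s, f j) = ∑ j ∈ s, (∏ k ∈ s.erase j, f k) * derivative (f j) := by
  rw [Finset.prod_eq_multiset_prod, derivative_prod, Finset.sum_eq_multiset_sum]
  congr 1

private lemma eval_deriv_prod {n : ℕ} (r : Fin n → ℂ) (i : Fin n) :
    (derivative (∏ j, (X - C (r j)))).eval (r i) = ∏ j ∈ Finset.univ.erase i, (r i - r j) := by
  rw [derivative_finset_prod]
  simp only [derivative_sub, derivative_X, derivative_C, sub_zero, mul_one]
  rw [eval_finset_sum]
  rw [Finset.sum_eq_single i]
  · rw [eval_prod]; exact Finset.prod_congr rfl fun j _ => by simp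
  · intro j _ hj
    rw [eval_prod]
    exact Finset.prod_eq_zero (Finset.mem_erase.mpr ⟨hj.symm, Finset.mem_univ i⟩) (by simp)
  · simp

private lemma neg_one_pow_helper {g : ℕ} (hg : 1 ≤ g) :
    (-1 : ℂ) ^ (g * (2 * g - 1)) = (-1 : ℂ) ^ g := by
  rcases Nat.even_or_odd g with he | ho
  · rw [he.neg_one_pow, (he.mul_right _).neg_one_pow]
  · rw [ho.neg_one_pow, (ho.mul ⟨g - 1, by omega⟩).neg_one_pow]

private lemma prod_sub_flip {n : ℕ} (v : Fin (2 * n) → ℂ) (c : ℂ) :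
    ∏ i, (v i - c) = ∏ i, (c - v i) := by
  have h : ∀ i ∈ Finset.univ, v i - c = -1 * (c - v i) := fun i _ => by ring
  rw [Finset.prod_congr rfl h, Finset.prod_mul_distrib, Finset.prod_const]
  have : (-1 : ℂ) ^ (Finset.univ : Finset (Fin (2 * n))).card = 1 := by
    rw [Finset.card_univ, Fintype.card_fin]
    exact Even.neg_one_pow ⟨n, by ring⟩
  rw [this, one_mul]

private lemma prod_erase_sign {g : ℕ} (hg : 1 ≤ g) (r : Fin (2 * g) → ℂ) :
    ∏ i, ∏ j ∈ Finset.univ.erase i, (r i - r j)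
      = (-1) ^ g * ∏ i, ∏ j ∈ Finset.Ioi i, (r i - r j) ^ 2 := by
  have key := Finset.prod_prod_Ioi_mul_eq_prod_prod_off_diag (fun x y => r y - r x)
  simp only [Finset.compl_singleton] at key
  calc ∏ i, ∏ j ∈ Finset.univ.erase i, (r i - r j)
      = ∏ i, ∏ j ∈ Finset.Ioi i, ((r i - r j) * (r j - r i)) := by convert key.symm using 2
    _ = ∏ i, ∏ j ∈ Finset.Ioi i, (-1 : ℂ) * (r i - r j) ^ 2 := by
        refine Finset.prod_congr rfl fun i _ => Finset.prod_congr rfl fun j _ => by ring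
    _ = ∏ i : Fin (2 * g), ((-1 : ℂ) ^ (Finset.Ioi i).card * ∏ j ∈ Finset.Ioi i, (r i - r j) ^ 2) := by
        refine Finset.prod_congr rfl fun i _ => by
          rw [Finset.prod_mul_distrib, Finset.prod_const]
    _ = (∏ i : Fin (2 * g), (-1 : ℂ) ^ (Finset.Ioi i).card) * ∏ i, ∏ j ∈ Finset.Ioi i, (r i - r j) ^ 2 := by
        rw [Finset.prod_mul_distrib]
    _ = (-1) ^ g * ∏ i, ∏ j ∈ Finset.Ioi i, (r i - r j) ^ 2 := by
        congr 1
        rw [Finset.prod_pow_eq_pow_sum]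
        have hsum : ∑ i : Fin (2 * g), (Finset.Ioi i).card = g * (2 * g - 1) := by
          have h2 : ∀ i : Fin (2 * g), (Finset.Ioi i).card = 2 * g - 1 - (i : ℕ) := by
            intro i; exact Fin.card_Ioi i
          rw [Finset.sum_congr rfl fun i _ => h2 i]
          rw [Fin.sum_univ_eq_sum_range (fun k => 2 * g - 1 - k)]
          rw [Finset.sum_range_reflect (fun k => k) (2 * g)]
          have := Finset.sum_range_id_mul_two (2 * g)
          have h3 : 2 * g * (2 * g - 1) = 2 * (g * (2 * g - 1)) := by ring
          omega
        rw [hsum]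
        exact neg_one_pow_helper hg
end Helpers

open Polynomial in
/-- The discriminant of `f_t = a₀X^{2g} + ⋯ + a_{g−1}X^{g+1} + tX^g + a_{g+1}X^{g−1} + ⋯ + a_{2g}`,
viewed as a polynomial in the middle coefficient `t`, has degree at most `2g` with
leading coefficient `g^{2g} a₀^{g−1} a_{2g}^{g−1}`.  Here the discriminant is expressed via a
listing `r` of the roots with multiplicity as `a₀^{2·2g−2} ∏_{i<j} (r_i − r_j)²`. -/
theorem disc_middle_coefficient_leading_term (g : ℕ) (hg : 1 ≤ g) (a : ℕ → ℂ)
    (ha0 : a 0 ≠ 0) :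
    ∃ Q : Polynomial ℂ, Q.degree < (2 * g : ℕ) ∧
      ∀ (t : ℂ) (r : Fin (2 * g) → ℂ),
        C (a 0) * ∏ i, (X - C (r i)) =
            C t * X ^ g + ∑ i ∈ (Finset.range (2 * g + 1)).erase g, C (a i) * X ^ (2 * g - i) →
          (a 0) ^ (2 * (2 * g) - 2) * ∏ i : Fin (2 * g), ∏ j ∈ Finset.Ioi i, (r i - r j) ^ 2 =
            (g : ℂ) ^ (2 * g) * (a 0) ^ (g - 1) * (a (2 * g)) ^ (g - 1) * t ^ (2 * g) +
              Q.eval t := by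
  classical
  obtain ⟨e, rfl⟩ : ∃ e, g = e + 1 := ⟨g - 1, by omega⟩
  have hgC : ((e + 1 : ℕ) : ℂ) ≠ 0 := Nat.cast_ne_zero.mpr (by omega)
  set h : Polynomial ℂ := ∑ i ∈ (Finset.range (2 * (e + 1) + 1)).erase (e + 1),
      C (a i) * X ^ (2 * (e + 1) - i) with hh
  set P : Polynomial ℂ := X * derivative h - C ((e + 1 : ℕ) : ℂ) * h with hP
  have hmem0 : (0 : ℕ) ∈ (Finset.range (2 * (e + 1) + 1)).erase (e + 1) := by
    rw [Finset.mem_erase]; exact ⟨by omega, Finset.mem_range.mpr (by omega)⟩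
  have hmem2g : (2 * (e + 1) : ℕ) ∈ (Finset.range (2 * (e + 1) + 1)).erase (e + 1) := by
    rw [Finset.mem_erase]; exact ⟨by omega, Finset.mem_range.mpr (by omega)⟩
  have hcoeff_h_top : h.coeff (2 * (e + 1)) = a 0 := by
    rw [hh, finset_sum_coeff]
    rw [Finset.sum_eq_single_of_mem 0 hmem0]
    · simp
    · intro i hi hne
      simp only [coeff_C_mul, coeff_X_pow]
      rw [Finset.mem_erase, Finset.mem_range] at hi
      rw [if_neg (by omega), mul_zero]
  have hdeg_h : h.natDegree ≤ 2 * (e + 1) := by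
    rw [hh]
    apply natDegree_sum_le_of_forall_le
    intro i _
    exact (natDegree_C_mul_le _ _).trans (by rw [natDegree_X_pow]; omega)
  have heval_h0 : h.eval 0 = a (2 * (e + 1)) := by
    rw [hh, eval_finset_sum]
    rw [Finset.sum_eq_single_of_mem (2 * (e + 1)) hmem2g]
    · simp
    · intro i hi hne
      rw [Finset.mem_erase, Finset.mem_range] at hi
      simp only [eval_mul, eval_C, eval_pow, eval_X]
      rw [zero_pow (by omega), mul_zero]
  have hPcoeff : P.coeff (2 * (e + 1)) = ((e + 1 : ℕ) : ℂ) * a 0 := by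
    rw [hP, coeff_sub, coeff_C_mul]
    have h1 : (X * derivative h).coeff (2 * (e + 1)) = (derivative h).coeff (2 * e + 1) := by
      rw [show 2 * (e + 1) = (2 * e + 1) + 1 from by omega, coeff_X_mul]
    rw [h1, coeff_derivative, show 2 * e + 1 + 1 = 2 * (e + 1) from by omega, hcoeff_h_top]
    push_cast
    ring
  have hPdegle : P.natDegree ≤ 2 * (e + 1) := by
    refine (natDegree_sub_le _ _).trans (max_le ?_ ?_)
    · refine (natDegree_mul_le).trans ?_
      have := natDegree_derivative_le h
      rw [natDegree_X]
      omega
    · exact (natDegree_C_mul_le _ _).trans hdeg_h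
  have hPne : P.coeff (2 * (e + 1)) ≠ 0 := by rw [hPcoeff]; exact mul_ne_zero hgC ha0
  have hPdeg : P.natDegree = 2 * (e + 1) := le_antisymm hPdegle (le_natDegree_of_ne_zero hPne)
  have hPlead : P.leadingCoeff = ((e + 1 : ℕ) : ℂ) * a 0 := by
    rw [leadingCoeff, hPdeg, hPcoeff]
  obtain ⟨u, hu⟩ := exists_fin_fact P (2 * (e + 1)) hPdeg
  rw [hPlead] at hu
  have hPeval0 : P.eval 0 = -(((e + 1 : ℕ) : ℂ) * a (2 * (e + 1))) := by
    rw [hP]; simp [heval_h0]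
  have hprod_u : a 0 * ∏ m, u m = -(a (2 * (e + 1))) := by
    have h1 : P.eval 0 = (((e + 1 : ℕ) : ℂ) * a 0) * ∏ m, (0 - u m) := by
      rw [hu]; simp [eval_prod]
    have h2 : ∏ m : Fin (2 * (e + 1)), ((0 : ℂ) - u m) = ∏ m, u m := by
      rw [← prod_sub_flip u 0]
      exact Finset.prod_congr rfl fun m _ => by ring
    rw [h2, hPeval0] at h1
    apply mul_left_cancel₀ hgC
    linear_combination -h1
  set L : Polynomial ℂ :=
    ∏ m : Fin (2 * (e + 1)), (C ((derivative h).eval (u m)) + C (((e + 1 : ℕ) : ℂ) * (u m) ^ e) * X)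
    with hL
  have hfac_deg : ∀ m : Fin (2 * (e + 1)),
      (C ((derivative h).eval (u m)) + C (((e + 1 : ℕ) : ℂ) * (u m) ^ e) * X).natDegree ≤ 1 := by
    intro m
    refine (natDegree_add_le _ _).trans (max_le ?_ ?_)
    · rw [natDegree_C]; omega
    · exact (natDegree_C_mul_le _ _).trans (by rw [natDegree_X])
  have hLdeg : L.natDegree ≤ 2 * (e + 1) := by
    rw [hL]
    refine le_trans (natDegree_prod_le _ _) ?_
    refine le_trans (Finset.sum_le_sum (fun m (_ : m ∈ Finset.univ) => hfac_deg m)) ?_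
    simp
  have hLcoeff : L.coeff (2 * (e + 1)) = ∏ m : Fin (2 * (e + 1)), (((e + 1 : ℕ) : ℂ) * (u m) ^ e) := by
    rw [hL]
    have := coeff_prod_of_natDegree_le (Finset.univ)
      (fun m : Fin (2 * (e + 1)) =>
        C ((derivative h).eval (u m)) + C (((e + 1 : ℕ) : ℂ) * (u m) ^ e) * X) 1
      (fun m _ => hfac_deg m)
    rw [Finset.card_univ, Fintype.card_fin, mul_one] at this
    rw [this]
    exact Finset.prod_congr rfl fun m _ => by
      rw [coeff_add, coeff_C, if_neg one_ne_zero, coeff_C_mul, coeff_X_one, zero_add, mul_one]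
  set c : ℂ := ((e + 1 : ℕ) : ℂ) ^ (2 * (e + 1)) * (a 0) ^ (e + 1 - 1) * (a (2 * (e + 1))) ^ (e + 1 - 1)
    with hc
  have hsqe : ((-1 : ℂ)) ^ e * ((-1 : ℂ)) ^ e = 1 := by
    rw [← pow_add]; exact Even.neg_one_pow ⟨e, by ring⟩
  have hne1 : (-1 : ℂ) ^ (e + 1 + 1) * (-1 : ℂ) ^ e = 1 := by
    rw [← pow_add, show e + 1 + 1 + e = 2 * (e + 1) from by omega]
    exact Even.neg_one_pow ⟨e + 1, by ring⟩
  have hcoeff_match : (-1 : ℂ) ^ (e + 1 + 1) * (a 0) ^ (2 * e) * L.coeff (2 * (e + 1)) = c := by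
    rw [hLcoeff, Finset.prod_mul_distrib, Finset.prod_const, Finset.prod_pow,
      Finset.card_univ, Fintype.card_fin]
    have he2 : (a 0) ^ e * (∏ m, u m) ^ e = ((-1 : ℂ)) ^ e * (a (2 * (e + 1))) ^ e := by
      rw [← mul_pow, hprod_u, neg_eq_neg_one_mul, mul_pow]
    apply mul_left_cancel₀ (pow_ne_zero e ha0)
    rw [hc, show e + 1 - 1 = e from by omega]
    linear_combination ((-1 : ℂ) ^ (e + 1 + 1) * (a 0) ^ (2 * e) * ((e + 1 : ℕ) : ℂ) ^ (2 * (e + 1))) * he2 +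
      ((a 0) ^ (2 * e) * ((e + 1 : ℕ) : ℂ) ^ (2 * (e + 1)) * (a (2 * (e + 1))) ^ e) * hne1
  refine ⟨C ((-1 : ℂ) ^ (e + 1 + 1) * (a 0) ^ (2 * e)) * L - C c * X ^ (2 * (e + 1)), ?_, ?_⟩
  · rw [degree_lt_iff_coeff_zero]
    intro m hm
    rw [coeff_sub, coeff_C_mul, coeff_C_mul, coeff_X_pow]
    rcases eq_or_lt_of_le hm with hm' | hm'
    · rw [← hm', if_pos rfl, mul_one, hcoeff_match, sub_self]
    · rw [coeff_eq_zero_of_natDegree_lt (lt_of_le_of_lt hLdeg hm'), if_neg (by omega)]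
      ring
  · intro t r Hf
    set F : Polynomial ℂ := C t * X ^ (e + 1) + h with hF
    have hMdeg : (∏ i : Fin (2 * (e + 1)), (X - C (r i))).natDegree = 2 * (e + 1) := by
      rw [natDegree_prod _ _ (fun i _ => X_sub_C_ne_zero (r i))]
      simp [natDegree_X_sub_C]
    have hMmonic : (∏ i : Fin (2 * (e + 1)), (X - C (r i))).Monic :=
      monic_prod_of_monic _ _ fun i _ => monic_X_sub_C _
    have hFdeg : F.natDegree = 2 * (e + 1) := by
      rw [← Hf, natDegree_C_mul ha0, hMdeg]
    have hFcoefftop : F.coeff (2 * (e + 1)) = a 0 := by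
      have hm1 := hMmonic.coeff_natDegree
      rw [hMdeg] at hm1
      rw [← Hf, coeff_C_mul, hm1, mul_one]
    have hder : derivative F = C t * (C ((e + 1 : ℕ) : ℂ) * X ^ e) + derivative h := by
      rw [hF, derivative_add, derivative_C_mul, derivative_X_pow]
      norm_num
    have hdercoeff : (derivative F).coeff (2 * e + 1) = 2 * ((e + 1 : ℕ) : ℂ) * a 0 := by
      rw [coeff_derivative, show 2 * e + 1 + 1 = 2 * (e + 1) from by omega, hFcoefftop]
      push_cast
      ring
    have hderdegle : (derivative F).natDegree ≤ 2 * e + 1 := by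
      have h1 := natDegree_derivative_le F
      rw [hFdeg] at h1
      omega
    have hderdeg : (derivative F).natDegree = 2 * e + 1 :=
      le_antisymm hderdegle (le_natDegree_of_ne_zero (by
        rw [hdercoeff]
        exact mul_ne_zero (mul_ne_zero two_ne_zero hgC) ha0))
    have hderlead : (derivative F).leadingCoeff = 2 * ((e + 1 : ℕ) : ℂ) * a 0 := by
      rw [leadingCoeff, hderdeg, hdercoeff]
    obtain ⟨s, hs⟩ := exists_fin_fact (derivative F) (2 * e + 1) hderdeg
    rw [hderlead] at hs
    have hevalr : ∀ i, (derivative F).eval (r i)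
        = a 0 * ∏ j ∈ Finset.univ.erase i, (r i - r j) := by
      intro i
      rw [← Hf, derivative_C_mul, eval_mul, eval_C, eval_deriv_prod]
    have hroot_s : ∀ k, (derivative F).eval (s k) = 0 := by
      intro k
      rw [hs, eval_mul, eval_prod]
      exact mul_eq_zero_of_right _ (Finset.prod_eq_zero (Finset.mem_univ k) (by simp))
    have hE1 : ∀ k, t * (((e + 1 : ℕ) : ℂ) * (s k) ^ e) + (derivative h).eval (s k) = 0 := by
      intro k
      have h1 := hroot_s k
      rw [hder] at h1
      simp only [eval_add, eval_mul, eval_C, eval_pow, eval_X] at h1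
      exact h1
    have hFeval : ∀ x : ℂ, F.eval x = t * x ^ (e + 1) + h.eval x := by
      intro x; rw [hF]; simp
    have hPeval : ∀ x : ℂ, P.eval x = x * (derivative h).eval x - ((e + 1 : ℕ) : ℂ) * h.eval x := by
      intro x; rw [hP]; simp
    have hfs : ∀ k, ((e + 1 : ℕ) : ℂ) * F.eval (s k) = -(P.eval (s k)) := by
      intro k
      rw [hFeval, hPeval]
      linear_combination (s k) * hE1 k
    have hA : ∏ i, (derivative F).eval (r i)
        = (a 0) ^ (2 * (e + 1)) *
          ((-1 : ℂ) ^ (e + 1) * ∏ i, ∏ j ∈ Finset.Ioi i, (r i - r j) ^ 2) := by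
      rw [Finset.prod_congr rfl fun i _ => hevalr i, Finset.prod_mul_distrib, Finset.prod_const,
        Finset.card_univ, Fintype.card_fin, prod_erase_sign hg]
    have hA2 : ∏ i, (derivative F).eval (r i)
        = (2 * ((e + 1 : ℕ) : ℂ) * a 0) ^ (2 * (e + 1)) * ∏ i, ∏ k, (r i - s k) := by
      have h1 : ∀ i, (derivative F).eval (r i)
          = 2 * ((e + 1 : ℕ) : ℂ) * a 0 * ∏ k, (r i - s k) := by
        intro i; rw [hs]; simp [eval_prod]
      rw [Finset.prod_congr rfl fun i _ => h1 i, Finset.prod_mul_distrib, Finset.prod_const,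
        Finset.card_univ, Fintype.card_fin]
    have hB : ∏ k, F.eval (s k) = (a 0) ^ (2 * e + 1) * ∏ k, ∏ i, (s k - r i) := by
      have h1 : ∀ k, F.eval (s k) = a 0 * ∏ i, (s k - r i) := by
        intro k; rw [← Hf]; simp [eval_prod]
      rw [Finset.prod_congr rfl fun k _ => h1 k, Finset.prod_mul_distrib, Finset.prod_const,
        Finset.card_univ, Fintype.card_fin]
    have hswap1 : ∏ i, ∏ k, (r i - s k) = ∏ k, ∏ i, (s k - r i) := by
      rw [Finset.prod_comm]
      exact Finset.prod_congr rfl fun k _ => prod_sub_flip (n := e + 1) r (s k)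
    have hCp : ∏ k, P.eval (s k)
        = (((e + 1 : ℕ) : ℂ) * a 0) ^ (2 * e + 1) * ∏ k, ∏ m, (s k - u m) := by
      have h1 : ∀ x : ℂ, P.eval x = ((e + 1 : ℕ) : ℂ) * a 0 * ∏ m, (x - u m) := by
        intro x; rw [hu]; simp [eval_prod]
      rw [Finset.prod_congr rfl fun k _ => h1 (s k), Finset.prod_mul_distrib, Finset.prod_const,
        Finset.card_univ, Fintype.card_fin]
    have hDm : ∏ m, (derivative F).eval (u m)
        = (2 * ((e + 1 : ℕ) : ℂ) * a 0) ^ (2 * (e + 1)) * ∏ m, ∏ k, (u m - s k) := by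
      have h1 : ∀ m, (derivative F).eval (u m)
          = 2 * ((e + 1 : ℕ) : ℂ) * a 0 * ∏ k, (u m - s k) := by
        intro m; rw [hs]; simp [eval_prod]
      rw [Finset.prod_congr rfl fun m _ => h1 m, Finset.prod_mul_distrib, Finset.prod_const,
        Finset.card_univ, Fintype.card_fin]
    have hswap2 : ∏ k, ∏ m, (s k - u m) = ∏ m, ∏ k, (u m - s k) := by
      have h1 : ∀ k : Fin (2 * e + 1), ∏ m, (s k - u m) = ∏ m, (u m - s k) :=
        fun k => (prod_sub_flip (n := e + 1) u (s k)).symm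
      rw [Finset.prod_congr rfl fun k _ => h1 k, Finset.prod_comm]
    have hWZ : ∏ k, ∏ i, (s k - r i) = -∏ k, ∏ m, (s k - u m) := by
      have hE3 : ∏ k, (((e + 1 : ℕ) : ℂ) * F.eval (s k)) = ∏ k, (-(P.eval (s k))) :=
        Finset.prod_congr rfl fun k _ => hfs k
      rw [Finset.prod_mul_distrib, Finset.prod_const, Finset.card_univ, Fintype.card_fin] at hE3
      have hneg : ∏ k : Fin (2 * e + 1), (-(P.eval (s k))) = -∏ k, P.eval (s k) := by
        rw [Finset.prod_congr rfl (fun k _ => (neg_eq_neg_one_mul (P.eval (s k)))),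
          Finset.prod_mul_distrib, Finset.prod_const, Finset.card_univ, Fintype.card_fin]
        rw [show (-1 : ℂ) ^ (2 * e + 1) = -1 from Odd.neg_one_pow ⟨e, by ring⟩]
        ring
      rw [hneg, hB, hCp] at hE3
      apply mul_left_cancel₀ (pow_ne_zero (2 * e + 1) (mul_ne_zero hgC ha0))
      rw [mul_neg]
      linear_combination hE3
    have hkey : ∏ i, (derivative F).eval (r i) = -∏ m, (derivative F).eval (u m) := by
      rw [hA2, hswap1, hWZ, hDm, ← hswap2]
      ring
    have hLeval : L.eval t = ∏ m, (derivative F).eval (u m) := by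
      rw [hL, eval_prod]
      refine Finset.prod_congr rfl fun m _ => ?_
      rw [hder]
      simp only [eval_add, eval_mul, eval_C, eval_pow, eval_X]
      ring
    have hQeval : ((C ((-1 : ℂ) ^ (e + 1 + 1) * (a 0) ^ (2 * e)) * L
          - C c * X ^ (2 * (e + 1))).eval t)
        = (-1 : ℂ) ^ (e + 1 + 1) * (a 0) ^ (2 * e) * L.eval t - c * t ^ (2 * (e + 1)) := by
      simp
    rw [hQeval, hLeval]
    rw [show 2 * (2 * (e + 1)) - 2 = 4 * e + 2 from by omega]
    have hDmA : ∏ m, (derivative F).eval (u m) = -(∏ i, (derivative F).eval (r i)) := by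
      rw [hkey]; ring
    rw [hDmA, hA]
    linear_combination (-(a 0) ^ (4 * e + 2) *
      (∏ i, ∏ j ∈ Finset.Ioi i, (r i - r j) ^ 2)) * hsqe
end

section
/- For every ε > 0 there exists g₀ = g₀(ε) > 0 (depending only on ε) such that for every prime p, every integer g ≥ g₀, and every monic real polynomial f of degree 2g, the Lebesgue measure of the set { x ∈ [−2p^{g/2}/g, 2p^{g/2}/g] : |f(x)| ≤ p^{g²(1−ε)} } is at most p^{g/2}/g. -/
open Filter MeasureTheory

private lemma pow_card_le_prod_aux (c : ℝ) (hc : 0 ≤ c) :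
    ∀ (s : Multiset ℝ), (∀ y ∈ s, c ≤ y) → c ^ (Multiset.card s) ≤ s.prod := by
  intro s
  induction s using Multiset.induction_on with
  | empty => simp
  | cons a t ih =>
    intro h
    have ha : c ≤ a := h a (Multiset.mem_cons_self a t)
    have ht := ih (fun y hy => h y (Multiset.mem_cons_of_mem hy))
    have htn : (0:ℝ) ≤ t.prod := le_trans (pow_nonneg hc _) ht
    simp only [Multiset.card_cons, Multiset.prod_cons, pow_succ]
    calc c ^ Multiset.card t * c ≤ t.prod * a := mul_le_mul ht ha hc htn
    _ = a * t.prod := mul_comm _ _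

private lemma eventually_sq_le (c : ℝ) (hc : 0 < c) :
    ∀ᶠ x : ℝ in atTop, 4 * x ^ 2 ≤ Real.exp (c * x) := by
  have h1 : Tendsto (fun x : ℝ => Real.exp x / x ^ 2) atTop atTop :=
    Real.tendsto_exp_div_pow_atTop 2
  have h2 : Tendsto (fun x : ℝ => c * x) atTop atTop :=
    Tendsto.const_mul_atTop hc tendsto_id
  have h3 := (h1.comp h2).eventually_ge_atTop (4 / c ^ 2)
  filter_upwards [h3, eventually_gt_atTop (0:ℝ)] with x hx hx0
  have hcx : 0 < c * x := mul_pos hc hx0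
  have hx' : 4 / c ^ 2 ≤ Real.exp (c * x) / (c * x) ^ 2 := by
    simpa [Function.comp] using hx
  have h4 := mul_le_mul_of_nonneg_right hx' (sq_nonneg (c * x))
  rw [div_mul_cancel₀ _ (by positivity : ((c * x) ^ 2) ≠ 0)] at h4
  calc 4 * x ^ 2 = 4 / c ^ 2 * (c * x) ^ 2 := by field_simp
  _ ≤ Real.exp (c * x) := h4

/-- For every `ε > 0` there is `g₀ = g₀(ε) > 0` such that for every prime `p`, every `g ≥ g₀`
and every monic real polynomial `f` of degree `2g`, the Lebesgue measure of
`{ x ∈ [−2p^{g/2}/g, 2p^{g/2}/g] : |f(x)| ≤ p^{g²(1−ε)} }` is at most `p^{g/2}/g`. -/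
theorem small_values_measure_bound (ε : ℝ) (hε : 0 < ε) :
    ∃ g₀ : ℕ, 0 < g₀ ∧ ∀ (p : ℕ), p.Prime → ∀ g : ℕ, g₀ ≤ g →
      ∀ f : Polynomial ℝ, f.Monic → f.natDegree = 2 * g →
        MeasureTheory.volume
            {x : ℝ | x ∈ Set.Icc (-(2 * (p : ℝ) ^ ((g : ℝ) / 2) / g))
                (2 * (p : ℝ) ^ ((g : ℝ) / 2) / g) ∧
              |f.eval x| ≤ (p : ℝ) ^ ((g : ℝ) ^ 2 * (1 - ε))} ≤
          ENNReal.ofReal ((p : ℝ) ^ ((g : ℝ) / 2) / g) := by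
  set c : ℝ := ε / 2 * Real.log 2 with hcdef
  have hc : 0 < c := mul_pos (by linarith) (Real.log_pos one_lt_two)
  have hev : ∀ᶠ n : ℕ in atTop, 4 * (n:ℝ) ^ 2 ≤ Real.exp (c * n) :=
    (tendsto_natCast_atTop_atTop).eventually (eventually_sq_le c hc)
  obtain ⟨g₁, hg₁⟩ := Filter.eventually_atTop.mp hev
  refine ⟨max g₁ 1, lt_of_lt_of_le one_pos (le_max_right _ _), ?_⟩
  intro p hp g hg f hmonic hdeg
  have hg1 : 1 ≤ g := le_trans (le_max_right _ _) hg
  have hgR : (1:ℝ) ≤ (g:ℝ) := by exact_mod_cast hg1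
  have hgpos : (0:ℝ) < g := by linarith
  have hp2 : (2:ℝ) ≤ (p:ℝ) := by exact_mod_cast hp.two_le
  have hp0 : (0:ℝ) < (p:ℝ) := by linarith
  -- key numeric inequality
  have hkey : 4 * (g:ℝ) ^ 2 ≤ (p:ℝ) ^ (ε * g / 2) := by
    have h2 : (2:ℝ) ^ (ε * g / 2) ≤ (p:ℝ) ^ (ε * g / 2) :=
      Real.rpow_le_rpow (by norm_num) hp2 (by positivity)
    have h1 : 4 * (g:ℝ) ^ 2 ≤ (2:ℝ) ^ (ε * g / 2) := by
      rw [Real.rpow_def_of_pos (by norm_num)]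
      have h0 := hg₁ g (le_trans (le_max_left _ _) hg)
      calc 4 * (g:ℝ)^2 ≤ Real.exp (c * g) := h0
      _ = Real.exp (Real.log 2 * (ε * g / 2)) := by rw [hcdef]; ring_nf
    linarith
  set a : ℝ := (g:ℝ) * (1 - ε) / 2 with hadef
  set r : ℝ := (p:ℝ) ^ a with hrdef
  have hr0 : 0 < r := Real.rpow_pos_of_pos hp0 a
  have hM : (p:ℝ) ^ ((g:ℝ) ^ 2 * (1 - ε)) = r ^ (2 * g) := by
    rw [hrdef, ← Real.rpow_natCast ((p:ℝ) ^ a) (2*g), ← Real.rpow_mul hp0.le]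
    congr 1
    push_cast
    ring
  -- roots of f over ℂ
  set F : Polynomial ℂ := f.map (algebraMap ℝ ℂ) with hFdef
  have hFm : F.Monic := hmonic.map _
  have hFdeg : F.natDegree = 2 * g := by
    rw [hFdef, f.natDegree_map, hdeg]
  set R : Multiset ℂ := F.roots with hRdef
  have hsplits : Polynomial.Splits F := IsAlgClosed.splits F
  have hcard : Multiset.card R = 2 * g := by
    rw [hRdef, Polynomial.splits_iff_card_roots.mp hsplits, hFdeg]
  have hFprod : F = (R.map fun z => Polynomial.X - Polynomial.C z).prod :=
    hsplits.eq_prod_roots_of_monic hFm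
  have heval : ∀ x : ℝ, |f.eval x| =
      ((R.map fun z => ‖(x:ℂ) - z‖)).prod := by
    intro x
    have h2 : F.eval (x:ℂ) = ((f.eval x : ℝ) : ℂ) := by
      rw [hFdef, Polynomial.eval_map, ← Complex.coe_algebraMap]
      exact Polynomial.eval₂_hom _ x
    have h1 : ((f.eval x : ℝ) : ℂ) = (R.map fun z => (x:ℂ) - z).prod := by
      rw [← h2]
      conv_lhs => rw [hFprod]
      rw [Polynomial.eval_multiset_prod, Multiset.map_map]
      simp [Function.comp]
    calc |f.eval x| = ‖((f.eval x : ℝ):ℂ)‖ := by rw [Complex.norm_real, Real.norm_eq_abs]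
    _ = ‖(R.map fun z => (x:ℂ) - z).prod‖ := by rw [h1]
    _ = ((R.map fun z => (x:ℂ) - z).map (‖·‖)).prod := map_multiset_prod (normHom (α := ℂ)) _
    _ = _ := by rw [Multiset.map_map]; rfl
  set T := R.toFinset with hTdef
  have hRne : R ≠ 0 := by
    intro h
    rw [h] at hcard
    simp at hcard
    omega
  have hTne : T.Nonempty := by rwa [hTdef, Multiset.toFinset_nonempty]
  have hsub : {x : ℝ | x ∈ Set.Icc (-(2 * (p : ℝ) ^ ((g : ℝ) / 2) / g))
                (2 * (p : ℝ) ^ ((g : ℝ) / 2) / g) ∧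
              |f.eval x| ≤ (p : ℝ) ^ ((g : ℝ) ^ 2 * (1 - ε))} ⊆
      ⋃ z ∈ T, Metric.closedBall z.re r := by
    rintro x ⟨-, hx⟩
    obtain ⟨z₀, hz₀T, hz₀min⟩ :=
      Finset.exists_min_image T (fun z => ‖(x:ℂ) - z‖) hTne
    have hle : ‖(x:ℂ) - z₀‖ ≤ r := by
      have h1 : ‖(x:ℂ) - z₀‖ ^ (2*g) ≤
          (R.map fun z => ‖(x:ℂ)-z‖).prod := by
        have h2 := pow_card_le_prod_aux (‖(x:ℂ) - z₀‖)
          (norm_nonneg _) (R.map fun z => ‖(x:ℂ)-z‖) (by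
            rintro y hy
            obtain ⟨z, hz, rfl⟩ := Multiset.mem_map.mp hy
            exact hz₀min z (Multiset.mem_toFinset.mpr hz))
        rwa [Multiset.card_map, hcard] at h2
      have hpow : ‖(x:ℂ) - z₀‖ ^ (2*g) ≤ r ^ (2*g) := by
        calc ‖(x:ℂ) - z₀‖ ^ (2*g) ≤ _ := h1
        _ = |f.eval x| := (heval x).symm
        _ ≤ (p:ℝ) ^ ((g:ℝ)^2*(1-ε)) := hx
        _ = r ^ (2*g) := hM
      exact le_of_pow_le_pow_left₀ (by omega) hr0.le hpow
    refine Set.mem_biUnion hz₀T ?_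
    rw [Metric.mem_closedBall, Real.dist_eq]
    have hre : |x - z₀.re| ≤ ‖(x:ℂ) - z₀‖ := by
      simpa using Complex.abs_re_le_norm ((x:ℂ) - z₀)
    linarith
  have hTcard : T.card ≤ 2 * g := by
    rw [hTdef, ← hcard]
    exact Multiset.toFinset_card_le R
  have hfinal : (2*g:ℝ) * (2*r) ≤ (p:ℝ) ^ ((g:ℝ)/2) / g := by
    rw [le_div_iff₀ hgpos]
    have hsplit : (p:ℝ) ^ ((g:ℝ)/2) = r * (p:ℝ)^(ε*g/2) := by
      rw [hrdef, ← Real.rpow_add hp0]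
      congr 1
      rw [hadef]
      ring
    rw [hsplit]
    calc (2*(g:ℝ))*(2*r)*g = 4*(g:ℝ)^2 * r := by ring
    _ ≤ (p:ℝ)^(ε*g/2) * r := mul_le_mul_of_nonneg_right hkey hr0.le
    _ = r * (p:ℝ)^(ε*g/2) := mul_comm _ _
  calc MeasureTheory.volume {x : ℝ | x ∈ Set.Icc (-(2 * (p : ℝ) ^ ((g : ℝ) / 2) / g))
                (2 * (p : ℝ) ^ ((g : ℝ) / 2) / g) ∧
              |f.eval x| ≤ (p : ℝ) ^ ((g : ℝ) ^ 2 * (1 - ε))}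
      ≤ volume (⋃ z ∈ T, Metric.closedBall z.re r) := measure_mono hsub
  _ ≤ ∑ z ∈ T, volume (Metric.closedBall z.re r) := measure_biUnion_finset_le T _
  _ = T.card • ENNReal.ofReal (2*r) := by
      simp [Real.volume_closedBall, Finset.sum_const]
  _ ≤ (2*g) • ENNReal.ofReal (2*r) := by
      rw [nsmul_eq_mul, nsmul_eq_mul]
      exact mul_le_mul_left (by exact_mod_cast Nat.cast_le.mpr hTcard) _
  _ = ENNReal.ofReal ((2*g:ℝ) * (2*r)) := by
      rw [nsmul_eq_mul, ← ENNReal.ofReal_natCast (2*g),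
        ← ENNReal.ofReal_mul (by positivity)]
      congr 1
      push_cast
      ring
  _ ≤ ENNReal.ofReal ((p:ℝ) ^ ((g:ℝ)/2) / g) := ENNReal.ofReal_le_ofReal hfinal
end

section
/- Let f be a nonconstant real polynomial of degree n ≥ 1, let a ≤ b be real numbers, let M > 0, and set I := { x ∈ [a, b] : |f(x)| ≤ M }. Then ∫_I |f′(x)| dx ≤ 2nM. -/
open MeasureTheory Set Polynomial

private lemma poly_base_nonneg (f : Polynomial ℝ) (M : ℝ) (hM : 0 < M) (c d : ℝ)
    (hpos : ∀ x ∈ Set.Icc c d, 0 ≤ f.derivative.eval x) :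
    ∫ x in {x | x ∈ Set.Icc c d ∧ |f.eval x| ≤ M}, |f.derivative.eval x| ≤ 2 * M := by
  set S := {x | x ∈ Set.Icc c d ∧ |f.eval x| ≤ M} with hS
  have hScl : IsClosed S := by
    have : S = Set.Icc c d ∩ (fun x => |f.eval x|) ⁻¹' Set.Iic M := by
      ext x; simp [hS, Set.mem_Icc, and_assoc]
    rw [this]
    exact isClosed_Icc.inter (isClosed_Iic.preimage ((f.continuous).abs))
  have hSsub : S ⊆ Set.Icc c d := fun x hx => hx.1
  have hScomp : IsCompact S := isCompact_Icc.of_isClosed_subset hScl hSsub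
  rcases Set.eq_empty_or_nonempty S with hSe | hSne
  · rw [hSe]
    simp only [Measure.restrict_empty, integral_zero_measure]
    positivity
  · have hc' := hScomp.sInf_mem hSne
    have hd' := hScomp.sSup_mem hSne
    set c' := sInf S with hc'def
    set d' := sSup S with hd'def
    have hc'd' : c' ≤ d' := le_csSup hScomp.bddAbove hc'
    have hmono : MonotoneOn (fun x => f.eval x) (Set.Icc c d) := by
      apply monotoneOn_of_deriv_nonneg (convex_Icc c d) (f.continuous).continuousOn
      · intro x _; exact (f.hasDerivAt x).differentiableAt.differentiableWithinAt
      · intro x hx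
        rw [(f.hasDerivAt x).deriv]
        exact hpos x (interior_subset (s := Set.Icc c d) hx)
    have hSIcc : S = Set.Icc c' d' := by
      apply Set.Subset.antisymm
      · intro x hx
        exact ⟨csInf_le hScomp.bddBelow hx, le_csSup hScomp.bddAbove hx⟩
      · intro x hx
        have hxcd : x ∈ Set.Icc c d :=
          ⟨le_trans (hSsub hc').1 hx.1, le_trans hx.2 (hSsub hd').2⟩
        refine ⟨hxcd, ?_⟩
        have h1 : f.eval c' ≤ f.eval x := hmono (hSsub hc') hxcd hx.1
        have h2 : f.eval x ≤ f.eval d' := hmono hxcd (hSsub hd') hx.2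
        rw [abs_le]
        constructor
        · linarith [(abs_le.mp hc'.2).1]
        · linarith [(abs_le.mp hd'.2).2]
    rw [hSIcc]
    have hpos' : ∀ x ∈ Set.Icc c' d', 0 ≤ f.derivative.eval x := by
      intro x hx
      exact hpos x ⟨le_trans (hSsub hc').1 hx.1, le_trans hx.2 (hSsub hd').2⟩
    have heq : ∫ x in Set.Icc c' d', |f.derivative.eval x| =
        ∫ x in Set.Icc c' d', f.derivative.eval x := by
      apply setIntegral_congr_fun measurableSet_Icc
      intro x hx
      exact abs_of_nonneg (hpos' x hx)
    rw [heq]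
    have hFTC : ∫ x in c'..d', f.derivative.eval x = f.eval d' - f.eval c' := by
      apply intervalIntegral.integral_eq_sub_of_hasDerivAt (f := fun x => f.eval x)
      · intro x _; exact f.hasDerivAt x
      · exact (f.derivative.continuous).intervalIntegrable _ _
    have hiota : ∫ x in Set.Icc c' d', f.derivative.eval x = f.eval d' - f.eval c' := by
      rw [MeasureTheory.integral_Icc_eq_integral_Ioc,
        ← intervalIntegral.integral_of_le hc'd', hFTC]
    rw [hiota]
    have := (abs_le.mp hc'.2).1
    have := (abs_le.mp hd'.2).2
    linarith

private lemma poly_base (f : Polynomial ℝ) (M : ℝ) (hM : 0 < M) (c d : ℝ) (hcd : c ≤ d)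
    (hne : ∀ x ∈ Set.Ioo c d, f.derivative.eval x ≠ 0) :
    ∫ x in {x | x ∈ Set.Icc c d ∧ |f.eval x| ≤ M}, |f.derivative.eval x| ≤ 2 * M := by
  rcases eq_or_lt_of_le hcd with rfl | hlt
  · -- degenerate interval: the set is contained in {c}, a null set
    have hsub : {x | x ∈ Set.Icc c c ∧ |f.eval x| ≤ M} ⊆ {c} := by
      intro x hx
      have := hx.1
      simp only [Set.Icc_self, Set.mem_singleton_iff] at this ⊢
      exact this
    have h0 : volume {x | x ∈ Set.Icc c c ∧ |f.eval x| ≤ M} = 0 :=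
      measure_mono_null hsub (measure_singleton c)
    rw [Measure.restrict_eq_zero.mpr h0, integral_zero_measure]
    positivity
  · -- constant sign on Ioo c d
    have hsign : (∀ x ∈ Set.Ioo c d, 0 < f.derivative.eval x) ∨
        (∀ x ∈ Set.Ioo c d, f.derivative.eval x < 0) := by
      by_cases hp : ∀ x ∈ Set.Ioo c d, 0 < f.derivative.eval x
      · exact Or.inl hp
      · push_neg at hp
        obtain ⟨y, hy, hyle⟩ := hp
        have hyneg : f.derivative.eval y < 0 := lt_of_le_of_ne hyle (hne y hy)
        right
        intro x hx
        by_contra hxc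
        push_neg at hxc
        have hxpos : 0 < f.derivative.eval x := lt_of_le_of_ne hxc (Ne.symm (hne x hx))
        have hsub : Set.uIcc y x ⊆ Set.Ioo c d :=
          (Set.ordConnected_Ioo).uIcc_subset hy hx
        have h0mem : (0 : ℝ) ∈ Set.uIcc (f.derivative.eval y) (f.derivative.eval x) :=
          Set.mem_uIcc.mpr (Or.inl ⟨le_of_lt hyneg, le_of_lt hxpos⟩)
        obtain ⟨z, hz, hz0⟩ :=
          intermediate_value_uIcc (f := fun t => f.derivative.eval t)
            (f.derivative.continuous).continuousOn h0mem
        exact hne z (hsub hz) hz0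
    -- extend sign to the closed interval by continuity
    rcases hsign with hp | hn
    · apply poly_base_nonneg f M hM c d
      have hcl : Set.Icc c d ⊆ {x | 0 ≤ f.derivative.eval x} := by
        rw [← closure_Ioo (ne_of_lt hlt)]
        apply closure_minimal _ (isClosed_le continuous_const (f.derivative.continuous))
        intro x hx; exact le_of_lt (hp x hx)
      intro x hx; exact hcl hx
    · have hneg : ∀ x ∈ Set.Icc c d, f.derivative.eval x ≤ 0 := by
        have hcl : Set.Icc c d ⊆ {x | f.derivative.eval x ≤ 0} := by
          rw [← closure_Ioo (ne_of_lt hlt)]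
          apply closure_minimal _ (isClosed_le (f.derivative.continuous) continuous_const)
          intro x hx; exact le_of_lt (hn x hx)
        intro x hx; exact hcl hx
      have := poly_base_nonneg (-f) M hM c d (by
        intro x hx
        simp only [derivative_neg, eval_neg]
        linarith [hneg x hx])
      simpa only [derivative_neg, eval_neg, abs_neg] using this

private lemma poly_key (f : Polynomial ℝ) (hf' : f.derivative ≠ 0) (M : ℝ) (hM : 0 < M) :
    ∀ m : ℕ, ∀ c d : ℝ, c ≤ d →
      ((f.derivative.roots.toFinset.filter (fun x => x ∈ Set.Ioo c d)).card ≤ m) →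
      ∫ x in {x | x ∈ Set.Icc c d ∧ |f.eval x| ≤ M}, |f.derivative.eval x| ≤
        2 * (m + 1 : ℝ) * M := by
  intro m
  induction m using Nat.strong_induction_on with
  | _ m ih =>
    intro c d hcd hcard
    by_cases hroots : ∃ r ∈ f.derivative.roots.toFinset, r ∈ Set.Ioo c d
    · -- split at a root r
      obtain ⟨r, hrT, hrIoo⟩ := hroots
      set T := f.derivative.roots.toFinset with hT
      set A := T.filter (fun x => x ∈ Set.Ioo c r) with hA
      set B := T.filter (fun x => x ∈ Set.Ioo r d) with hB
      have hAB : Disjoint A B := by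
        rw [Finset.disjoint_left]
        intro x hxA hxB
        have h1 := (Finset.mem_filter.mp hxA).2
        have h2 := (Finset.mem_filter.mp hxB).2
        exact absurd (lt_trans h1.2 h2.1) (lt_irrefl x)
      have hrAB : r ∉ A ∪ B := by
        intro hr
        rcases Finset.mem_union.mp hr with h | h
        · exact absurd (Finset.mem_filter.mp h).2.2 (lt_irrefl r)
        · exact absurd (Finset.mem_filter.mp h).2.1 (lt_irrefl r)
      have hsubF : insert r (A ∪ B) ⊆ T.filter (fun x => x ∈ Set.Ioo c d) := by
        intro x hx
        rcases Finset.mem_insert.mp hx with rfl | hx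
        · exact Finset.mem_filter.mpr ⟨hrT, hrIoo⟩
        · rcases Finset.mem_union.mp hx with h | h
          · have := Finset.mem_filter.mp h
            exact Finset.mem_filter.mpr ⟨this.1, this.2.1, lt_trans this.2.2 hrIoo.2⟩
          · have := Finset.mem_filter.mp h
            exact Finset.mem_filter.mpr ⟨this.1, lt_trans hrIoo.1 this.2.1, this.2.2⟩
      have hcards : A.card + B.card + 1 ≤ m := by
        have h1 : (insert r (A ∪ B)).card = A.card + B.card + 1 := by
          rw [Finset.card_insert_of_notMem hrAB, Finset.card_union_of_disjoint hAB]
        have h2 := Finset.card_le_card hsubF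
        omega
      have hcards' : A.card + B.card + 1 ≤ m := hcards
      have hm1 : A.card < m := by omega
      have hm2 : B.card < m := by omega
      -- measurability / integrability facts
      have hmeas : ∀ u v : ℝ, MeasurableSet {x | x ∈ Set.Icc u v ∧ |f.eval x| ≤ M} := by
        intro u v
        have : {x | x ∈ Set.Icc u v ∧ |f.eval x| ≤ M} =
            Set.Icc u v ∩ (fun x => |f.eval x|) ⁻¹' Set.Iic M := by
          ext x; simp [Set.mem_Icc, and_assoc]
        rw [this]
        exact (isClosed_Icc.inter (isClosed_Iic.preimage ((f.continuous).abs))).measurableSet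
      have hintOn : ∀ u v : ℝ, IntegrableOn (fun x => |f.derivative.eval x|)
          {x | x ∈ Set.Icc u v ∧ |f.eval x| ≤ M} volume := by
        intro u v
        exact (((f.derivative.continuous).abs).integrableOn_Icc).mono_set (fun x hx => hx.1)
      set S := {x | x ∈ Set.Icc c d ∧ |f.eval x| ≤ M} with hSdef
      have hsplit : S = (S ∩ Set.Iic r) ∪ (S ∩ Set.Ioi r) := by
        ext x
        constructor
        · intro hx
          rcases le_or_gt x r with h | h
          · exact Or.inl ⟨hx, h⟩
          · exact Or.inr ⟨hx, h⟩
        · rintro (⟨hx, _⟩ | ⟨hx, _⟩) <;> exact hx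
      have hdisj : Disjoint (S ∩ Set.Iic r) (S ∩ Set.Ioi r) :=
        (Set.Iic_disjoint_Ioi le_rfl).mono (Set.inter_subset_right) (Set.inter_subset_right)
      have hi1 : IntegrableOn (fun x => |f.derivative.eval x|) (S ∩ Set.Iic r) volume :=
        (hintOn c d).mono_set Set.inter_subset_left
      have hi2 : IntegrableOn (fun x => |f.derivative.eval x|) (S ∩ Set.Ioi r) volume :=
        (hintOn c d).mono_set Set.inter_subset_left
      have hunion : ∫ x in S, |f.derivative.eval x| =
          (∫ x in S ∩ Set.Iic r, |f.derivative.eval x|) +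
          ∫ x in S ∩ Set.Ioi r, |f.derivative.eval x| := by
        conv_lhs => rw [hsplit]
        exact setIntegral_union hdisj ((hmeas c d).inter measurableSet_Ioi) hi1 hi2
      have hsub1 : S ∩ Set.Iic r ⊆ {x | x ∈ Set.Icc c r ∧ |f.eval x| ≤ M} := by
        rintro x ⟨⟨hx1, hx2⟩, hx3⟩
        exact ⟨⟨hx1.1, hx3⟩, hx2⟩
      have hsub2 : S ∩ Set.Ioi r ⊆ {x | x ∈ Set.Icc r d ∧ |f.eval x| ≤ M} := by
        rintro x ⟨⟨hx1, hx2⟩, hx3⟩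
        exact ⟨⟨le_of_lt hx3, hx1.2⟩, hx2⟩
      have hb1 : ∫ x in S ∩ Set.Iic r, |f.derivative.eval x| ≤
          ∫ x in {x | x ∈ Set.Icc c r ∧ |f.eval x| ≤ M}, |f.derivative.eval x| :=
        setIntegral_mono_set (hintOn c r)
          (Filter.Eventually.of_forall (fun x => abs_nonneg _))
          (HasSubset.Subset.eventuallyLE hsub1)
      have hb2 : ∫ x in S ∩ Set.Ioi r, |f.derivative.eval x| ≤
          ∫ x in {x | x ∈ Set.Icc r d ∧ |f.eval x| ≤ M}, |f.derivative.eval x| :=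
        setIntegral_mono_set (hintOn r d)
          (Filter.Eventually.of_forall (fun x => abs_nonneg _))
          (HasSubset.Subset.eventuallyLE hsub2)
      have hih1 := ih A.card hm1 c r (le_of_lt hrIoo.1) le_rfl
      have hih2 := ih B.card hm2 r d (le_of_lt hrIoo.2) le_rfl
      have hcast : (A.card : ℝ) + B.card + 1 ≤ m := by exact_mod_cast hcards'
      calc ∫ x in S, |f.derivative.eval x|
          = (∫ x in S ∩ Set.Iic r, |f.derivative.eval x|) +
            ∫ x in S ∩ Set.Ioi r, |f.derivative.eval x| := hunion
        _ ≤ 2 * ((A.card : ℝ) + 1) * M + 2 * ((B.card : ℝ) + 1) * M := by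
            exact add_le_add (le_trans hb1 hih1) (le_trans hb2 hih2)
        _ ≤ 2 * ((m : ℝ) + 1) * M := by nlinarith
    · -- no roots in the open interval: monotone piece
      push_neg at hroots
      have hne : ∀ x ∈ Set.Ioo c d, f.derivative.eval x ≠ 0 := by
        intro x hx h0
        exact hroots x (Multiset.mem_toFinset.mpr
          ((Polynomial.mem_roots').mpr ⟨hf', h0⟩)) hx
      have := poly_base f M hM c d hcd hne
      have h1 : (2 : ℝ) * M ≤ 2 * ((m : ℝ) + 1) * M := by nlinarith [Nat.cast_nonneg (α := ℝ) m]
      linarith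

/-- If `f` is a real polynomial of degree `n ≥ 1`, `a ≤ b`, `M > 0` and
`I = { x ∈ [a, b] : |f(x)| ≤ M }`, then `∫_I |f′(x)| dx ≤ 2nM`. -/
theorem integral_abs_deriv_le (f : Polynomial ℝ) (n : ℕ) (hn : 1 ≤ n)
    (hdeg : f.natDegree = n) (a b : ℝ) (hab : a ≤ b) (M : ℝ) (hM : 0 < M) :
    ∫ x in {x : ℝ | x ∈ Set.Icc a b ∧ |f.eval x| ≤ M}, |f.derivative.eval x| ≤
      2 * n * M := by
  have hndeg : f.natDegree ≠ 0 := by omega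
  have hf' : f.derivative ≠ 0 := by
    intro h
    have := Polynomial.natDegree_eq_zero_of_derivative_eq_zero h
    exact hndeg this
  have hcard : ((f.derivative.roots.toFinset.filter
      (fun x => x ∈ Set.Ioo a b)).card ≤ n - 1) := by
    have h1 := Finset.card_filter_le f.derivative.roots.toFinset (fun x => x ∈ Set.Ioo a b)
    have h2 := f.derivative.roots.toFinset_card_le
    have h3 := Polynomial.card_roots' f.derivative
    have h4 : f.derivative.natDegree < n := by
      rw [← hdeg]; exact Polynomial.natDegree_derivative_lt hndeg
    omega
  have := poly_key f hf' M hM (n - 1) a b hab hcard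
  have hc : ((n - 1 : ℕ) : ℝ) + 1 = (n : ℝ) := by
    rw [Nat.cast_sub hn]; push_cast; ring
  rw [hc] at this
  linarith
end

section
/- Let p be a prime, g ≥ 1 an integer, and a₁, …, a_g integers, and suppose that the polynomial F(a₁, …, a_g) is irreducible over ℚ. Let K be a number field containing a root π of F(a₁, …, a_g) (so that [ℚ(π) : ℚ] = 2g), and set π̄ := p/π, which is again an algebraic integer in K. Let R := ℤ[π, π̄] and ℤ[π] be the subrings of K generated over ℤ by {π, π̄} and {π} respectively. Then ℤ[π] has finite index in R as an additive group, and [R : ℤ[π]] ≤ p^{g(g−1)/2}. -/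
open AddSubgroup in
lemma relindex_step {G : Type*} [AddCommGroup G] (H K : AddSubgroup G) (x : G) (n : ℕ)
    (hn : 0 < n) (hxK : x ∈ K)
    (hKle : K ≤ H ⊔ AddSubgroup.closure {x})
    (hnx : (n : ℤ) • x ∈ H) : H.relIndex K ≠ 0 ∧ H.relIndex K ≤ n := by
  haveI : NeZero n := ⟨hn.ne'⟩
  obtain ⟨f, hf⟩ : ∃ f : ZMod n → K ⧸ H.addSubgroupOf K, Function.Surjective f := by
    refine ⟨fun z => QuotientAddGroup.mk ((z.val : ℤ) • (⟨x, hxK⟩ : K)), ?_⟩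
    intro q
    induction q using QuotientAddGroup.induction_on with
    | H y =>
      obtain ⟨h, hh, c, hc, hyc⟩ := AddSubgroup.mem_sup.mp (hKle y.2)
      obtain ⟨k, rfl⟩ := AddSubgroup.mem_closure_singleton.mp hc
      refine ⟨(k : ZMod n), ?_⟩
      rw [QuotientAddGroup.eq]
      rw [AddSubgroup.mem_addSubgroupOf]
      set v : ℤ := ((k : ZMod n).val : ℤ) with hv
      have hdvd : (n : ℤ) ∣ (k - v) := by
        rw [hv, ← ZMod.intCast_zmod_eq_zero_iff_dvd]
        push_cast [ZMod.natCast_val, ZMod.intCast_cast]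
        simp
      obtain ⟨m, hm⟩ := hdvd
      have : (-(v • (⟨x, hxK⟩ : K)) + y : K).1
          = h + m • ((n : ℤ) • x) := by
        have hk : k = v + n * m := by linarith
        push_cast
        rw [← hyc, smul_smul, hk]
        module
      rw [this]
      exact H.add_mem hh (zsmul_mem hnx m)
  have hfin : Finite (K ⧸ H.addSubgroupOf K) := Finite.of_surjective f hf
  have hcard : H.relIndex K = Nat.card (K ⧸ H.addSubgroupOf K) := rfl
  constructor
  · rw [hcard]
    exact Nat.card_ne_zero.mpr ⟨⟨0⟩, hfin⟩
  · rw [hcard]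
    calc Nat.card (K ⧸ H.addSubgroupOf K) ≤ Nat.card (ZMod n) :=
          Nat.card_le_card_of_surjective f hf
      _ = n := by simp [Nat.card_eq_fintype_card, ZMod.card]



/-- The monic integer polynomial
`F(a₁,…,a_g) = (x^{2g}+p^g) + a₁(x^{2g−1}+p^{g−1}x) + ⋯ + a_{g−1}(x^{g+1}+p·x^{g−1}) + a_g x^g`,
where `a i` denotes `a_{i+1}`. -/
noncomputable def FpolyInt (p g : ℕ) (a : Fin g → ℤ) : Polynomial ℤ :=
  (Polynomial.X ^ (2 * g) + Polynomial.C ((p : ℤ) ^ g)) +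
    ∑ i : Fin g,
      Polynomial.C (a i) *
        (if (i : ℕ) + 1 = g then Polynomial.X ^ g
         else Polynomial.X ^ (2 * g - ((i : ℕ) + 1)) +
           Polynomial.C ((p : ℤ) ^ (g - ((i : ℕ) + 1))) * Polynomial.X ^ ((i : ℕ) + 1))

/-- If `F(a₁,…,a_g)` is irreducible over `ℚ` with root `π` in a number field `K`, and
`π̄ = p/π`, then `ℤ[π]` has finite additive index in `R = ℤ[π, π̄]`, and this index is at most
`p^{g(g−1)/2}`. -/
theorem index_Zpi_in_R_le (p : ℕ) (hp : p.Prime) (g : ℕ) (hg : 1 ≤ g) (a : Fin g → ℤ)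
    (K : Type*) [Field K] [NumberField K] (π : K)
    (hirr : Irreducible ((FpolyInt p g a).map (Int.castRingHom ℚ)))
    (hroot : Polynomial.aeval π (FpolyInt p g a) = 0) :
    (Subalgebra.toSubmodule (Algebra.adjoin ℤ {π})).toAddSubgroup.relIndex
        (Subalgebra.toSubmodule (Algebra.adjoin ℤ {π, (p : K) / π})).toAddSubgroup ≠ 0 ∧
    (Subalgebra.toSubmodule (Algebra.adjoin ℤ {π})).toAddSubgroup.relIndex
        (Subalgebra.toSubmodule (Algebra.adjoin ℤ {π, (p : K) / π})).toAddSubgroup ≤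
      p ^ (g * (g - 1) / 2) := by
  classical
  have hpK : (p : K) ≠ 0 := Nat.cast_ne_zero.mpr hp.ne_zero
  set pib : K := (p : K) / π with hpibdef
  -- expansion of the root relation
  have hrel : π ^ (2*g) + (p:K)^g + ∑ i : Fin g, (a i : K) *
      (if (i:ℕ)+1 = g then π^g
       else π^(2*g-((i:ℕ)+1)) + (p:K)^(g-((i:ℕ)+1)) * π^((i:ℕ)+1)) = 0 := by
    have h := hroot
    simp only [FpolyInt, map_add, map_sum, map_mul, map_pow, Polynomial.aeval_X,
      Polynomial.aeval_C, apply_ite (Polynomial.aeval π), eq_intCast, Int.cast_pow,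
      Int.cast_natCast, map_ofNat, map_intCast, map_natCast] at h
    exact_mod_cast h
  have hπ : π ≠ 0 := by
    intro h0
    rw [h0] at hrel
    rw [zero_pow (by omega), Finset.sum_eq_zero (fun i _ => ?_)] at hrel
    · simp at hrel
      exact hp.ne_zero (by exact_mod_cast hrel.1)
    · have hi : (i : ℕ) < g := i.2
      split_ifs with h
      · rw [zero_pow (by omega), mul_zero]
      · rw [zero_pow (by omega), zero_pow (by omega), mul_zero, add_zero, mul_zero]
  have hpp : π * pib = (p : K) := by
    rw [hpibdef, mul_div_cancel₀ _ hπ]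
  have hmulk : ∀ k : ℕ, π ^ k * pib ^ k = (p:K) ^ k := fun k => by
    rw [← mul_pow, hpp]
  -- the chain of modules
  set C : ℕ → Submodule ℤ K := fun m => Submodule.span ℤ
      (Set.range (fun i : ℕ => π ^ i) ∪ ((fun k : ℕ => pib ^ k) '' Set.Icc 1 m)) with hC
  have hπmem : ∀ m i : ℕ, π ^ i ∈ C m := fun m i =>
    Submodule.subset_span (Or.inl ⟨i, rfl⟩)
  have hpibmem : ∀ m k : ℕ, 1 ≤ k → k ≤ m → pib ^ k ∈ C m := fun m k h1 h2 =>
    Submodule.subset_span (Or.inr ⟨k, ⟨h1, h2⟩, rfl⟩)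
  have hsmulmem : ∀ (m : ℕ) (c : ℤ) (x : K), x ∈ C m → (c : K) * x ∈ C m := by
    intro m c x hx
    rw [← zsmul_eq_mul]
    exact Submodule.smul_mem _ _ hx
  -- the key element and its properties
  have hkey : ∀ j : ℕ, 1 ≤ j → j ≤ g → (p:K)^(g-j) * pib^j ∈ C (j-1) := by
    intro j h1 hjg
    set e : K := -(π^(2*g-j) + ∑ i : Fin g, (a i : K) *
      (if (i:ℕ)+1 = g then π^(g-j)
       else π^(2*g-((i:ℕ)+1)-j) +
         (if j ≤ (i:ℕ)+1 then (p:K)^(g-((i:ℕ)+1)) * π^(((i:ℕ)+1)-j)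
          else (p:K)^(g-j) * pib^(j-((i:ℕ)+1))))) with he
    have hEeq : π ^ j * e = (p:K)^g := by
      have hexp : π ^ j * e = -(π^(2*g) + ∑ i : Fin g, (a i : K) *
          (if (i:ℕ)+1 = g then π^g
           else π^(2*g-((i:ℕ)+1)) + (p:K)^(g-((i:ℕ)+1)) * π^((i:ℕ)+1))) := by
        rw [he, mul_neg, mul_add, Finset.mul_sum]
        congr 2
        · rw [← pow_add]; congr 1; omega
        · refine Finset.sum_congr rfl fun i _ => ?_
          have hi : (i : ℕ) < g := i.2
          rw [mul_left_comm]
          congr 1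
          split_ifs with hig hji
          · rw [← pow_add]; congr 1; omega
          · rw [mul_add]
            congr 1
            · rw [← pow_add]; congr 1; omega
            · rw [mul_left_comm, ← pow_add]
              congr 2
              omega
          · rw [mul_add]
            congr 1
            · rw [← pow_add]; congr 1; omega
            · have hs : π ^ j = π ^ ((i:ℕ)+1) * π ^ (j - ((i:ℕ)+1)) := by
                rw [← pow_add]; congr 1; omega
              have h2' := hmulk (j - ((i:ℕ)+1))
              have h3' : (p:K)^(g-j) * (p:K)^(j-((i:ℕ)+1)) = (p:K)^(g-((i:ℕ)+1)) := by
                rw [← pow_add]; congr 1; omega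
              rw [hs]
              linear_combination (π^((i:ℕ)+1) * (p:K)^(g-j)) * h2' + π^((i:ℕ)+1) * h3'
      rw [hexp]
      linear_combination -hrel
    have hval : (p:K)^(g-j) * pib^j = e := by
      apply mul_left_cancel₀ (pow_ne_zero j hπ)
      rw [hEeq]
      have h3' : (p:K)^(g-j) * (p:K)^j = (p:K)^g := by
        rw [← pow_add]; congr 1; omega
      linear_combination (p:K)^(g-j) * hmulk j + h3'
    rw [hval, he]
    refine neg_mem (add_mem (hπmem _ _) (Submodule.sum_mem _ fun i _ => ?_))
    have hi : (i : ℕ) < g := i.2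
    rw [← zsmul_eq_mul]
    refine Submodule.smul_mem _ _ ?_
    split_ifs with hig hji
    · exact hπmem _ _
    · refine add_mem (hπmem _ _) ?_
      have : ((p:K))^(g-((i:ℕ)+1)) = (((p:ℤ)^(g-((i:ℕ)+1)) : ℤ) : K) := by push_cast; ring
      rw [this]
      exact hsmulmem _ _ _ (hπmem _ _)
    · refine add_mem (hπmem _ _) ?_
      have : ((p:K))^(g-j) = (((p:ℤ)^(g-j) : ℤ) : K) := by push_cast; ring
      rw [this]
      exact hsmulmem _ _ _ (hpibmem _ _ (by omega) (by omega))
  -- all powers pib^k for 1 ≤ k ≤ g lie in C (g-1)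
  have hbar : ∀ k : ℕ, 1 ≤ k → k ≤ g → pib ^ k ∈ C (g-1) := by
    intro k h1 hkg
    rcases lt_or_eq_of_le hkg with h | rfl
    · exact hpibmem _ _ h1 (by omega)
    · have := hkey k h1 le_rfl
      rw [Nat.sub_self, pow_zero, one_mul] at this
      exact this
  -- C (g-1) absorbs multiplication by π and pib
  have habsorb : ∀ x : K,
      (∀ s ∈ (Set.range (fun i : ℕ => π ^ i) ∪ ((fun k : ℕ => pib ^ k) '' Set.Icc 1 (g-1))),
        x * s ∈ C (g-1)) → ∀ m ∈ C (g-1), x * m ∈ C (g-1) := by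
    intro x hx m hm
    have hle : C (g-1) ≤ (C (g-1)).comap (LinearMap.mulLeft ℤ x) := by
      rw [hC]
      exact Submodule.span_le.mpr fun s hs => hx s hs
    exact hle hm
  have hgenπ : ∀ s ∈ (Set.range (fun i : ℕ => π ^ i) ∪
      ((fun k : ℕ => pib ^ k) '' Set.Icc 1 (g-1))), π * s ∈ C (g-1) := by
    rintro s (⟨i, rfl⟩ | ⟨k, ⟨hk1, hk2⟩, rfl⟩)
    · rw [← pow_succ']
      exact hπmem _ _
    · have hk : pib ^ k = pib * pib ^ (k-1) := by
        rw [← pow_succ']; congr 1; omega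
      have : π * pib ^ k = (p:K) * pib ^ (k-1) := by
        rw [hk, ← mul_assoc, hpp]
      rw [this]
      have hpz : ((p:K)) = (((p:ℤ) : ℤ) : K) := by push_cast; ring
      rw [hpz]
      rcases Nat.eq_or_lt_of_le hk1 with h | h
      · rw [← h, Nat.sub_self, pow_zero]
        have : (1 : K) = π ^ 0 := by rw [pow_zero]
        rw [this]
        exact hsmulmem _ _ _ (hπmem _ _)
      · exact hsmulmem _ _ _ (hpibmem _ _ (by omega) (by omega))
  have hgenpib : ∀ s ∈ (Set.range (fun i : ℕ => π ^ i) ∪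
      ((fun k : ℕ => pib ^ k) '' Set.Icc 1 (g-1))), pib * s ∈ C (g-1) := by
    rintro s (⟨i, rfl⟩ | ⟨k, ⟨hk1, hk2⟩, rfl⟩)
    · dsimp only
      rcases Nat.eq_zero_or_pos i with rfl | hi
      · rw [pow_zero, mul_one, ← pow_one pib]
        exact hbar 1 le_rfl hg
      · have : pib * π ^ i = (p:K) * π ^ (i-1) := by
          have : π ^ i = π * π ^ (i-1) := by rw [← pow_succ']; congr 1; omega
          rw [this, ← mul_assoc, mul_comm pib π, hpp]
        rw [this]
        have hpz : ((p:K)) = (((p:ℤ) : ℤ) : K) := by push_cast; ring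
        rw [hpz]
        exact hsmulmem _ _ _ (hπmem _ _)
    · rw [← pow_succ']
      exact hbar (k+1) (by omega) (by omega)
  -- adjoin ℤ {π, pib} ≤ C (g-1)
  have hBC : Subalgebra.toSubmodule (Algebra.adjoin ℤ ({π, pib} : Set K)) ≤ C (g-1) := by
    rw [Algebra.adjoin_eq_span]
    refine Submodule.span_le.mpr ?_
    intro z hz
    have : z ∈ C (g-1) ∧ ∀ m ∈ C (g-1), z * m ∈ C (g-1) := by
      induction hz using Submonoid.closure_induction with
      | mem x hx =>
        rcases hx with rfl | hx
        · exact ⟨by rw [← pow_one x]; exact hπmem _ _, habsorb _ hgenπ⟩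
        · rw [Set.mem_singleton_iff] at hx
          subst hx
          exact ⟨by rw [← pow_one pib]; exact hbar 1 le_rfl hg, habsorb _ hgenpib⟩
      | one => exact ⟨by rw [← pow_zero π]; exact hπmem _ _, fun m hm => by rw [one_mul]; exact hm⟩
      | mul x y hx hy ihx ihy =>
        exact ⟨ihx.2 y ihy.1, fun m hm => by rw [mul_assoc]; exact ihx.2 _ (ihy.2 m hm)⟩
    exact this.1
  -- identification of C 0 with adjoin ℤ {π}
  have hA0 : Subalgebra.toSubmodule (Algebra.adjoin ℤ ({π} : Set K)) = C 0 := by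
    rw [Algebra.adjoin_eq_span, hC]
    congr 1
    ext z
    simp only [SetLike.mem_coe, Submonoid.mem_closure_singleton, Set.mem_union, Set.mem_range,
      Set.mem_image, Set.mem_Icc]
    constructor
    · rintro ⟨n, rfl⟩; exact Or.inl ⟨n, rfl⟩
    · rintro (⟨n, rfl⟩ | ⟨k, ⟨h1, h2⟩, rfl⟩)
      · exact ⟨n, rfl⟩
      · omega

  -- AddSubgroup chain
  set D : ℕ → AddSubgroup K := fun m => (C m).toAddSubgroup with hD
  have hDle : ∀ m m' : ℕ, m ≤ m' → D m ≤ D m' := by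
    intro m m' h x hx
    exact Submodule.span_mono (Set.union_subset_union_right _
      (Set.image_mono (Set.Icc_subset_Icc_right h))) hx
  have hsup : ∀ m : ℕ, D (m+1) ≤ D m ⊔ AddSubgroup.closure {pib ^ (m+1)} := by
    intro m x hx
    have hsub : C (m+1) ≤ C m ⊔ Submodule.span ℤ {pib ^ (m+1)} := by
      conv_lhs => rw [hC]
      refine Submodule.span_le.mpr ?_
      rintro s (⟨i, rfl⟩ | ⟨k, ⟨hk1, hk2⟩, rfl⟩)
      · exact Submodule.mem_sup_left (hπmem _ _)
      · rcases Nat.lt_or_ge k (m+1) with h | h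
        · exact Submodule.mem_sup_left (hpibmem _ _ hk1 (by omega))
        · have hk : k = m+1 := by omega
          subst hk
          exact Submodule.mem_sup_right (Submodule.mem_span_singleton_self _)
    obtain ⟨y, hy, z, hz, rfl⟩ := Submodule.mem_sup.mp (hsub hx)
    obtain ⟨c, rfl⟩ := Submodule.mem_span_singleton.mp hz
    exact AddSubgroup.add_mem _ (AddSubgroup.mem_sup_left hy)
      (AddSubgroup.mem_sup_right (AddSubgroup.mem_closure_singleton.mpr ⟨c, rfl⟩))
  have hstepm : ∀ m : ℕ, m + 1 ≤ g - 1 →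
      (D m).relIndex (D (m+1)) ≠ 0 ∧ (D m).relIndex (D (m+1)) ≤ p ^ (g - (m+1)) := by
    intro m hm
    refine relindex_step _ _ (pib ^ (m+1)) (p ^ (g-(m+1))) (pow_pos hp.pos _) ?_ (hsup m) ?_
    · exact (Submodule.mem_toAddSubgroup _).mpr (hpibmem (m+1) (m+1) (by omega) le_rfl)
    · have hsm : (((p ^ (g-(m+1)) : ℕ) : ℤ)) • pib^(m+1) = (p:K)^(g-(m+1)) * pib^(m+1) := by
        rw [zsmul_eq_mul]; push_cast; ring
      rw [hsm]
      exact (Submodule.mem_toAddSubgroup _).mpr (hkey (m+1) (by omega) (by omega))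
  have chain : ∀ m : ℕ, m ≤ g - 1 →
      (D 0).relIndex (D m) ≠ 0 ∧
        (D 0).relIndex (D m) ≤ p ^ (∑ j ∈ Finset.range m, (g - 1 - j)) := by
    intro m
    induction m with
    | zero =>
      intro _
      rw [AddSubgroup.relIndex_self]
      exact ⟨one_ne_zero, by simp⟩
    | succ m ih =>
      intro hm1
      have ihm := ih (by omega)
      have hs := hstepm m hm1
      have hmul := AddSubgroup.relIndex_mul_relIndex (D 0) (D m) (D (m+1))
        (hDle 0 m (by omega)) (hDle m (m+1) (by omega))
      constructor
      · rw [← hmul]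
        exact Nat.mul_ne_zero ihm.1 hs.1
      · rw [← hmul, Finset.sum_range_succ]
        calc (D 0).relIndex (D m) * (D m).relIndex (D (m+1))
            ≤ p ^ (∑ j ∈ Finset.range m, (g-1-j)) * p ^ (g-(m+1)) :=
              Nat.mul_le_mul ihm.2 hs.2
          _ = p ^ (∑ j ∈ Finset.range m, (g-1-j) + (g-1-m)) := by
              rw [← pow_add]
              congr 1
              omega
  obtain ⟨hfin, hle'⟩ := chain (g-1) le_rfl
  have hexp : ∑ j ∈ Finset.range (g-1), (g-1-j) = g * (g-1) / 2 := by
    obtain ⟨n, rfl⟩ : ∃ n, g = n + 1 := ⟨g-1, by omega⟩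
    simp only [Nat.add_sub_cancel]
    have h2 : ∑ j ∈ Finset.range (n+1), (n-j) = ∑ j ∈ Finset.range (n+1), j := by
      have := Finset.sum_range_reflect (fun j => j) (n+1)
      calc ∑ j ∈ Finset.range (n+1), (n-j)
          = ∑ j ∈ Finset.range (n+1), (n+1-1-j) := by
            refine Finset.sum_congr rfl fun j hj => ?_
            omega
        _ = ∑ j ∈ Finset.range (n+1), j := this
    have h3 : ∑ j ∈ Finset.range (n+1), (n-j) = ∑ j ∈ Finset.range n, (n-j) := by
      rw [Finset.sum_range_succ]
      simp
    rw [← h3, h2, Finset.sum_range_id]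
    simp
  rw [hexp] at hle'
  have hAB : Algebra.adjoin ℤ ({π} : Set K) ≤ Algebra.adjoin ℤ ({π, pib} : Set K) :=
    Algebra.adjoin_mono (Set.singleton_subset_iff.mpr (Set.mem_insert _ _))
  have hA' : (Subalgebra.toSubmodule (Algebra.adjoin ℤ ({π} : Set K))).toAddSubgroup = D 0 := by
    rw [hA0]
  set B' := (Subalgebra.toSubmodule (Algebra.adjoin ℤ ({π, pib} : Set K))).toAddSubgroup with hB'
  have h1 : D 0 ≤ B' := by
    rw [← hA']
    intro x hx
    exact hAB hx
  have h2 : B' ≤ D (g-1) := fun x hx => hBC hx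
  have hmul2 := AddSubgroup.relIndex_mul_relIndex (D 0) B' (D (g-1)) h1 h2
  have hdvd : (D 0).relIndex B' ∣ (D 0).relIndex (D (g-1)) := ⟨_, hmul2.symm⟩
  rw [hA']
  constructor
  · intro h0
    rw [← hmul2, h0, zero_mul] at hfin
    exact hfin rfl
  · exact le_trans (Nat.le_of_dvd (Nat.pos_of_ne_zero hfin) hdvd) hle'
end

section
/- For every prime p and every ε > 0 there exists g₀ such that for every integer g ≥ g₀ and all real numbers x₁, …, x_g ∈ [−2√p, 2√p]: ∏_{1 ≤ i < j ≤ g} (x_j − x_i)² ≤ p^{(1/2 + ε)g²}. -/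
open Polynomial

noncomputable def chebQ : ℕ → Polynomial ℝ
  | 0 => Polynomial.C 2
  | 1 => Polynomial.X
  | (n+2) => Polynomial.X * chebQ (n+1) - Polynomial.C 4⁻¹ * chebQ n

lemma chebQ_eval_cos (n : ℕ) (θ : ℝ) :
    (chebQ n).eval (Real.cos θ) = 2 * (1/2)^n * Real.cos (n * θ) := by
  induction n using Nat.twoStepInduction with
  | zero => simp [chebQ]
  | one => simp [chebQ]
  | more n ih ih1 =>
    have h := Real.cos_add_cos (((n:ℝ)+2)*θ) (n*θ)
    rw [show (((n:ℝ)+2)*θ + n*θ)/2 = ((n:ℝ)+1)*θ by ring,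
        show (((n:ℝ)+2)*θ - n*θ)/2 = θ by ring] at h
    have key : Real.cos (((n:ℝ)+2) * θ) =
        2 * Real.cos θ * Real.cos (((n:ℝ)+1) * θ) - Real.cos ((n:ℝ) * θ) := by linarith
    rw [chebQ]
    simp only [Polynomial.eval_sub, Polynomial.eval_mul, Polynomial.eval_X, Polynomial.eval_C]
    rw [ih, ih1]
    push_cast
    rw [key]
    ring

lemma chebQ_natDegree_le (n : ℕ) : (chebQ n).natDegree ≤ n := by
  induction n using Nat.twoStepInduction with
  | zero => simp [chebQ]
  | one => simp [chebQ]
  | more n ih ih1 =>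
    rw [chebQ]
    refine le_trans (Polynomial.natDegree_sub_le _ _) (max_le ?_ ?_)
    · refine Polynomial.natDegree_mul_le.trans ?_
      simp only [Polynomial.natDegree_X]; omega
    · refine Polynomial.natDegree_mul_le.trans ?_
      simp only [Polynomial.natDegree_C, zero_add]
      omega

lemma chebQ_coeff (n : ℕ) : (chebQ n).coeff n = if n = 0 then 2 else 1 := by
  induction n using Nat.twoStepInduction with
  | zero => simp [chebQ]
  | one => simp [chebQ]
  | more n ih ih1 =>
    rw [chebQ, Polynomial.coeff_sub, show n+2 = (n+1)+1 from rfl, Polynomial.coeff_X_mul, ih1]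
    have h0 : (chebQ n).coeff (n + 1 + 1) = 0 :=
      Polynomial.coeff_eq_zero_of_natDegree_lt (lt_of_le_of_lt (chebQ_natDegree_le n) (by omega))
    simp [h0]

lemma chebQ_monic (n : ℕ) (hn : n ≠ 0) : (chebQ n).Monic := by
  have h := chebQ_coeff n
  rw [if_neg hn] at h
  exact Polynomial.monic_of_natDegree_le_of_coeff_eq_one n (chebQ_natDegree_le n) h

lemma chebQ_natDegree (n : ℕ) (hn : n ≠ 0) : (chebQ n).natDegree = n := by
  refine le_antisymm (chebQ_natDegree_le n) (Polynomial.le_natDegree_of_ne_zero ?_)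
  rw [chebQ_coeff n, if_neg hn]; norm_num

lemma chebQ_eval_abs_le (n : ℕ) {t : ℝ} (ht : t ∈ Set.Icc (-1:ℝ) 1) :
    |(chebQ n).eval t| ≤ 2 * (1/2)^n := by
  obtain ⟨h1, h2⟩ := ht
  have : t = Real.cos (Real.arccos t) := (Real.cos_arccos h1 h2).symm
  rw [this, chebQ_eval_cos]
  rw [abs_mul]
  have h3 : (0:ℝ) < 2 * (1/2)^n := by positivity
  calc |2 * (1/2:ℝ)^n| * |Real.cos (n * Real.arccos t)| ≤ |2 * (1/2:ℝ)^n| * 1 :=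
        mul_le_mul_of_nonneg_left (Real.abs_cos_le_one _) (abs_nonneg _)
    _ = 2 * (1/2)^n := by rw [mul_one, abs_of_pos h3]

noncomputable def chebP (g : ℕ) (j : Fin g) : Polynomial ℝ :=
  if (j : ℕ) = 0 then 1 else chebQ j

lemma det_vandermonde_abs_le (g : ℕ) (y : Fin g → ℝ) (hy : ∀ i, y i ∈ Set.Icc (-1:ℝ) 1) :
    |(Matrix.vandermonde y).det| ≤ (Nat.factorial g) * ∏ j : Fin g, (2 * (1/2:ℝ)^(j:ℕ)) := by
  have hdeg : ∀ i : Fin g, (chebP g i).natDegree = i := by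
    intro i
    by_cases h : (i:ℕ) = 0
    · simp [chebP, h]
    · simp [chebP, h, chebQ_natDegree _ h]
  have hmonic : ∀ i : Fin g, (chebP g i).Monic := by
    intro i
    by_cases h : (i:ℕ) = 0
    · simp [chebP, h, Polynomial.monic_one]
    · simpa [chebP, h] using chebQ_monic _ h
  have hbound : ∀ i j : Fin g, |(chebP g j).eval (y i)| ≤ 2 * (1/2:ℝ)^(j:ℕ) := by
    intro i j
    by_cases h : (j:ℕ) = 0
    · simp [chebP, h]
    · rw [chebP, if_neg h]
      exact chebQ_eval_abs_le _ (hy i)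
  rw [Matrix.det_eval_matrixOfPolynomials_eq_det_vandermonde y (chebP g) hdeg hmonic]
  set M : Matrix (Fin g) (Fin g) ℝ := Matrix.of (fun i j => (chebP g j).eval (y i)) with hM
  have habs : ∀ σ : Equiv.Perm (Fin g),
      |((Equiv.Perm.sign σ : ℤ) : ℝ) * ∏ i, M (σ i) i| ≤ ∏ j : Fin g, (2 * (1/2:ℝ)^(j:ℕ)) := by
    intro σ
    rw [abs_mul]
    have hsign : |((Equiv.Perm.sign σ : ℤ) : ℝ)| = 1 := by
      rcases Int.units_eq_one_or (Equiv.Perm.sign σ) with h | h <;> simp [h]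
    rw [hsign, one_mul, Finset.abs_prod]
    refine Finset.prod_le_prod (fun i _ => abs_nonneg _) (fun i _ => ?_)
    exact hbound (σ i) i
  calc |M.det| = |∑ σ : Equiv.Perm (Fin g), ((Equiv.Perm.sign σ : ℤ) : ℝ) * ∏ i, M (σ i) i| := by
        rw [Matrix.det_apply']
    _ ≤ ∑ σ : Equiv.Perm (Fin g), |((Equiv.Perm.sign σ : ℤ) : ℝ) * ∏ i, M (σ i) i| :=
        Finset.abs_sum_le_sum_abs _ _
    _ ≤ (Finset.univ : Finset (Equiv.Perm (Fin g))).card • ∏ j : Fin g, (2 * (1/2:ℝ)^(j:ℕ)) :=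
        Finset.sum_le_card_nsmul _ _ _ (fun σ _ => habs σ)
    _ = (Nat.factorial g) * ∏ j : Fin g, (2 * (1/2:ℝ)^(j:ℕ)) := by
        rw [Finset.card_univ, Fintype.card_perm, Fintype.card_fin, nsmul_eq_mul]


/-- For every prime `p` and every `ε > 0` there is `g₀` such that for all `g ≥ g₀` and all real
numbers `x₁, …, x_g ∈ [−2√p, 2√p]`: `∏_{i<j} (x_j − x_i)² ≤ p^{(1/2+ε)g²}`. -/
theorem vandermonde_real_interval_bound (p : ℕ) (hp : p.Prime) (ε : ℝ) (hε : 0 < ε) :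
    ∃ g₀ : ℕ, ∀ g : ℕ, g₀ ≤ g →
      ∀ x : Fin g → ℝ, (∀ i, x i ∈ Set.Icc (-(2 * Real.sqrt p)) (2 * Real.sqrt p)) →
        ∏ i : Fin g, ∏ j ∈ Finset.Ioi i, (x j - x i) ^ 2 ≤
          (p : ℝ) ^ ((1 / 2 + ε) * (g : ℝ) ^ 2) := by
  have hp1R : (1:ℝ) < p := by exact_mod_cast hp.one_lt
  have hp0R : (0:ℝ) < p := by linarith
  have hlp : 0 < Real.log p := Real.log_pos hp1R
  -- asymptotic condition
  have ho : (fun x : ℝ => Real.log 4 + 2 * Real.log x) =o[Filter.atTop] (id : ℝ → ℝ) := by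
    have h1 := Asymptotics.isLittleO_const_id_atTop (Real.log 4)
    have h2 := Real.isLittleO_log_id_atTop.const_mul_left 2
    simpa using h1.add h2
  have hoev := ho.def (show (0:ℝ) < ε * Real.log p by positivity)
  have hreal : ∀ᶠ x : ℝ in Filter.atTop, Real.log 4 + 2 * Real.log x ≤ ε * Real.log p * x := by
    filter_upwards [hoev, Filter.eventually_ge_atTop (0:ℝ)] with x h1 h2
    have := le_abs_self (Real.log 4 + 2 * Real.log x)
    rw [Real.norm_eq_abs, Real.norm_eq_abs, id, abs_of_nonneg h2] at h1
    linarith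
  have hnat := ((tendsto_natCast_atTop_atTop (R := ℝ)).eventually hreal).and
    (Filter.eventually_ge_atTop 1)
  obtain ⟨g₀, hg₀⟩ := Filter.eventually_atTop.mp hnat
  refine ⟨g₀, fun g hg x hx => ?_⟩
  obtain ⟨hcond, hg1⟩ := hg₀ g hg
  have hg1R : (1:ℝ) ≤ g := by exact_mod_cast hg1
  set s : ℝ := 2 * Real.sqrt p with hs_def
  have hsq : (0:ℝ) < Real.sqrt p := Real.sqrt_pos.mpr hp0R
  have hs : 0 < s := by positivity
  have hs2 : s ^ 2 = 4 * p := by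
    rw [hs_def, mul_pow, Real.sq_sqrt hp0R.le]; ring
  set y : Fin g → ℝ := fun i => x i / s with hy_def
  have hy : ∀ i, y i ∈ Set.Icc (-1:ℝ) 1 := by
    intro i
    obtain ⟨h1, h2⟩ := hx i
    constructor
    · rw [hy_def]; dsimp only
      rw [le_div_iff₀ hs]; linarith
    · rw [hy_def]; dsimp only
      rw [div_le_one hs]; linarith
  have hxy : ∀ i j : Fin g, x j - x i = s * (y j - y i) := by
    intro i j
    rw [hy_def]; dsimp only
    rw [mul_sub, mul_div_cancel₀ _ hs.ne', mul_div_cancel₀ _ hs.ne']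
  set E : ℕ := ∑ i : Fin g, (i : ℕ) with hE_def
  -- counting: ∑ i, card (Ioi i) = E
  have hcard : ∑ i : Fin g, (Finset.Ioi i).card = E := by
    rw [hE_def]
    simp only [Fin.card_Ioi]
    rw [Fin.sum_univ_eq_sum_range (fun i => g - 1 - i), Fin.sum_univ_eq_sum_range (fun i => i)]
    exact Finset.sum_range_reflect (fun i => i) g
  have h2E : 2 * E ≤ g ^ 2 := by
    rw [hE_def, Fin.sum_univ_eq_sum_range (fun i => i), mul_comm]
    rw [Finset.sum_range_id_mul_two]
    calc g * (g - 1) ≤ g * g := Nat.mul_le_mul_left g (Nat.sub_le g 1)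
      _ = g ^ 2 := (sq g).symm
  -- step 1: rescale
  have step1 : ∏ i : Fin g, ∏ j ∈ Finset.Ioi i, (x j - x i) ^ 2
      = (s ^ 2) ^ E * ∏ i : Fin g, ∏ j ∈ Finset.Ioi i, (y j - y i) ^ 2 := by
    calc ∏ i : Fin g, ∏ j ∈ Finset.Ioi i, (x j - x i) ^ 2
        = ∏ i : Fin g, ∏ j ∈ Finset.Ioi i, (s ^ 2 * (y j - y i) ^ 2) := by
          refine Finset.prod_congr rfl fun i _ => Finset.prod_congr rfl fun j _ => ?_
          rw [hxy i j, mul_pow]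
      _ = (s ^ 2) ^ E * ∏ i : Fin g, ∏ j ∈ Finset.Ioi i, (y j - y i) ^ 2 := by
          simp_rw [Finset.prod_mul_distrib, Finset.prod_const]
          rw [Finset.prod_pow_eq_pow_sum, hcard]
  -- step 2: Vandermonde determinant
  have step2 : ∏ i : Fin g, ∏ j ∈ Finset.Ioi i, (y j - y i) ^ 2
      = ((Matrix.vandermonde y).det) ^ 2 := by
    rw [Matrix.det_vandermonde]
    simp_rw [Finset.prod_pow]
  -- step 3: determinant bound
  have hdet := det_vandermonde_abs_le g y hy
  have hC : ∏ j : Fin g, (2 * (1/2:ℝ)^(j:ℕ)) = 2 ^ g * (1/2:ℝ) ^ E := by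
    rw [Finset.prod_mul_distrib, Finset.prod_const, Finset.card_univ, Fintype.card_fin,
      Finset.prod_pow_eq_pow_sum]
  have step3 : ((Matrix.vandermonde y).det) ^ 2
      ≤ ((g.factorial : ℝ) * (2 ^ g * (1/2:ℝ) ^ E)) ^ 2 := by
    rw [← sq_abs]
    refine pow_le_pow_left₀ (abs_nonneg _) ?_ 2
    rw [← hC]; exact hdet
  -- combine
  have hfac : ((g.factorial : ℝ)) ≤ (g:ℝ) ^ g := by exact_mod_cast Nat.factorial_le_pow g
  have hfac0 : (0:ℝ) ≤ (g.factorial : ℝ) := by positivity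
  have hsp : (s ^ 2) * (1/2:ℝ) ^ 2 = p := by rw [hs2]; ring
  have combine : ∏ i : Fin g, ∏ j ∈ Finset.Ioi i, (x j - x i) ^ 2
      ≤ ((g.factorial : ℝ) * 2 ^ g) ^ 2 * (p:ℝ) ^ E := by
    rw [step1, step2]
    calc (s ^ 2) ^ E * ((Matrix.vandermonde y).det) ^ 2
        ≤ (s ^ 2) ^ E * ((g.factorial : ℝ) * (2 ^ g * (1/2:ℝ) ^ E)) ^ 2 :=
          mul_le_mul_of_nonneg_left step3 (by positivity)
      _ = ((g.factorial : ℝ) * 2 ^ g) ^ 2 * ((s ^ 2) * (1/2:ℝ) ^ 2) ^ E := by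
          have gen : ∀ (a b c : ℝ) (n : ℕ),
              a ^ n * (b * (c * (1/2:ℝ) ^ n)) ^ 2 = (b * c) ^ 2 * (a * (1/2:ℝ) ^ 2) ^ n := by
            intro a b c n
            rw [mul_pow a ((1/2:ℝ)^2) n, ← pow_mul, mul_comm 2 n, pow_mul]
            ring
          exact gen (s ^ 2) _ _ E
      _ = ((g.factorial : ℝ) * 2 ^ g) ^ 2 * (p:ℝ) ^ E := by rw [hsp]
  refine combine.trans ?_
  -- final: ((g!)*2^g)^2 * p^E ≤ p^((1/2+ε) g²)
  have hsplit : (1/2 + ε) * (g:ℝ)^2 = (1/2) * (g:ℝ)^2 + ε * (g:ℝ)^2 := by ring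
  rw [hsplit, Real.rpow_add hp0R]
  have claimA : (p:ℝ) ^ E ≤ (p:ℝ) ^ ((1/2) * (g:ℝ)^2) := by
    rw [← Real.rpow_natCast (p:ℝ) E]
    rw [Real.rpow_le_rpow_left_iff hp1R]
    have : ((2 * E : ℕ) : ℝ) ≤ ((g ^ 2 : ℕ) : ℝ) := by exact_mod_cast h2E
    push_cast at this
    linarith
  have claimB : ((g.factorial : ℝ) * 2 ^ g) ^ 2 ≤ (p:ℝ) ^ (ε * (g:ℝ)^2) := by
    have hg0R : (0:ℝ) < g := by linarith
    have hb1 : ((g.factorial : ℝ) * 2 ^ g) ^ 2 ≤ ((g:ℝ)^g * 2 ^ g) ^ 2 := by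
      refine pow_le_pow_left₀ (by positivity) ?_ 2
      exact mul_le_mul_of_nonneg_right hfac (by positivity)
    refine hb1.trans ?_
    have h1 : ((g:ℝ)^g * 2 ^ g) ^ 2 = (2 * (g:ℝ)) ^ (2 * g) := by
      rw [← mul_pow, pow_mul', mul_comm ((g:ℝ)) 2]
    rw [h1]
    have hpos1 : (0:ℝ) < (2 * (g:ℝ)) ^ (2 * g) := by positivity
    have hpos2 : (0:ℝ) < (p:ℝ) ^ (ε * (g:ℝ)^2) := Real.rpow_pos_of_pos hp0R _
    rw [← Real.log_le_log_iff hpos1 hpos2]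
    rw [Real.log_pow, Real.log_rpow hp0R]
    have hlog2g : Real.log (2 * (g:ℝ)) = Real.log 2 + Real.log g :=
      Real.log_mul (by norm_num) (by positivity)
    have hlog4 : Real.log 4 = 2 * Real.log 2 := by
      rw [show (4:ℝ) = 2 ^ 2 by norm_num, Real.log_pow]; push_cast; ring
    have hlogg : 0 ≤ Real.log (g:ℝ) := Real.log_nonneg hg1R
    -- (2g) * (log 2 + log g) ≤ ε g² log p
    have key : 2 * (Real.log 2 + Real.log g) ≤ ε * Real.log p * g := by
      rw [hlog4] at hcond; linarith
    calc ((2 * g : ℕ) : ℝ) * Real.log (2 * (g:ℝ))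
        = (g:ℝ) * (2 * (Real.log 2 + Real.log g)) := by push_cast; rw [hlog2g]; ring
      _ ≤ (g:ℝ) * (ε * Real.log p * g) := mul_le_mul_of_nonneg_left key (by positivity)
      _ = ε * (g:ℝ)^2 * Real.log p := by ring
  calc ((g.factorial : ℝ) * 2 ^ g) ^ 2 * (p:ℝ) ^ E
      ≤ (p:ℝ) ^ (ε * (g:ℝ)^2) * (p:ℝ) ^ ((1/2) * (g:ℝ)^2) := by
        refine mul_le_mul claimB claimA (by positivity) (by positivity)
    _ = (p:ℝ) ^ ((1/2) * (g:ℝ)^2) * (p:ℝ) ^ (ε * (g:ℝ)^2) := by ring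
end
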